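/- arXiv:1908.06005 — 7 statements merged into one kernel-verified Lean document; each statement's English description precedes it below -/
import Mathlib

section
/- Let M denote the space of real symmetric trace-free 2×2 matrices. There exist a constant C > 0 and a family of smooth positive functions {γ_k ∈ C^∞(M;ℝ) : k ∈ Λ} such that for every R ∈ M: (i) γ_{−k}(R) = γ_k(R) for all k ∈ Λ; (ii) R = Σ_{k∈Λ} (γ_k(R))² (k ⊘ k); and (iii) γ_k(R) ≤ C (1 + |R|)^{1/2} for all k ∈ Λ, where |R| denotes a norm on M. -/
open MeasureTheory Real Filter Matrix
open scoped ENNReal NNReal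

noncomputable section

/-- Points of the torus `𝕋² = ℝ²/(2πℤ)²` are represented by points of `ℝ²`;
functions on `𝕋²` are `2π`-periodic functions on `ℝ²`. -/
abbrev Vec2 := Fin 2 → ℝ

/-- The `j`-th standard basis vector of `ℝ²`. -/
def e2 (j : Fin 2) : Vec2 := Pi.single j 1

/-- A fundamental domain for `𝕋²`. -/
def Q2 : Set Vec2 := Set.univ.pi fun _ => Set.Ioc (0:ℝ) (2*π)

/-- Lebesgue measure on `𝕋²`, realized on the fundamental domain. -/
def μT : Measure Vec2 := volume.restrict Q2

/-- `2π`-periodicity in each coordinate: a function on `𝕋²`. -/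
def Per {α : Type*} (f : Vec2 → α) : Prop :=
  ∀ (x : Vec2) (j : Fin 2), f (x + (2*π) • e2 j) = f x

/-- Divergence of a vector field. -/
def divg (f : Vec2 → Vec2) (x : Vec2) : ℝ := ∑ j, fderiv ℝ (fun y => f y j) x (e2 j)

/-- The set `Λ⁺` of direction vectors. -/
def Λp : Finset Vec2 :=
  { ![3/5, 4/5], ![3/5, -4/5], ![4/5, 3/5], ![4/5, -3/5] }

/-- The set `Λ⁻ = −Λ⁺`. -/
def Λm : Finset Vec2 := Λp.image (fun k => -k)

/-- The set of directions `Λ = Λ⁺ ∪ Λ⁻`. -/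
def Λdir : Finset Vec2 := Λp ∪ Λm

/-- `k⊥ = (−k₂, k₁)`. -/
def perp (k : Vec2) : Vec2 := ![-(k 1), k 0]

/-- Trace-free part of the tensor product of two real vectors:
`f ⊘ g = f ⊗ g − ½(f·g) I₂`. -/
def ot (f g : Vec2) : Fin 2 → Fin 2 → ℝ :=
  fun i j => f i * g j - (if i = j then (f ⬝ᵥ g) / 2 else 0)

/-- Trace-free part of the tensor product of two complex vectors. -/
def otC (f g : Fin 2 → ℂ) : Fin 2 → Fin 2 → ℂ :=
  fun i j => f i * g j - (if i = j then (f ⬝ᵥ g) / 2 else 0)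

lemma vne {a b c d : ℝ} (h : b ≠ d) : (![a,b] : Vec2) ≠ ![c,d] := by
  intro h'; exact h (congrFun h' 1)
lemma vne0 {a b c d : ℝ} (h : a ≠ c) : (![a,b] : Vec2) ≠ ![c,d] := by
  intro h'; exact h (congrFun h' 0)

lemma sum_Λdir {M : Type*} [AddCommMonoid M] (f : Vec2 → M) :
    ∑ k ∈ Λdir, f k =
      (f ![3/5,4/5] + f ![3/5,-4/5] + f ![4/5,3/5] + f ![4/5,-3/5])
      + (f (-![3/5,4/5]) + f (-![3/5,-4/5]) + f (-![4/5,3/5]) + f (-![4/5,-3/5])) := by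
  have hdisj : Disjoint Λp Λm := by
    rw [Finset.disjoint_left]
    intro a ha hm
    simp only [Λm, Finset.mem_image] at hm
    obtain ⟨b, hb, rfl⟩ := hm
    simp only [Λp, Finset.mem_insert, Finset.mem_singleton] at ha hb
    have h0 : 0 < b 0 := by rcases hb with rfl|rfl|rfl|rfl <;> norm_num
    have h0' : 0 < (-b) 0 := by rcases ha with h|h|h|h <;> rw [h] <;> norm_num
    simp only [Pi.neg_apply] at h0'
    linarith
  have hsum : ∀ g : Vec2 → M, ∑ k ∈ Λp, g k =
      g ![3/5,4/5] + g ![3/5,-4/5] + g ![4/5,3/5] + g ![4/5,-3/5] := by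
    intro g
    rw [show Λp = insert ![3/5,4/5] (insert ![3/5,-4/5] (insert ![4/5,3/5]
        ({![4/5,-3/5]} : Finset Vec2))) from rfl]
    rw [Finset.sum_insert (by
      simp only [Finset.mem_insert, Finset.mem_singleton]
      push_neg
      exact ⟨vne (by norm_num), vne0 (by norm_num), vne0 (by norm_num)⟩)]
    rw [Finset.sum_insert (by
      simp only [Finset.mem_insert, Finset.mem_singleton]
      push_neg
      exact ⟨vne0 (by norm_num), vne0 (by norm_num)⟩)]
    rw [Finset.sum_insert (by
      simp only [Finset.mem_singleton]
      exact vne (by norm_num))]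
    rw [Finset.sum_singleton]
    abel
  rw [Λdir, Finset.sum_union hdisj, hsum, Λm,
    Finset.sum_image (by intro a _ b _ h; exact neg_injective h), hsum (fun k => f (-k))]

/-- `√(1 + x² + y²)` for `x = R 0 0`, `y = R 0 1`. -/
def tS (R : Fin 2 → Fin 2 → ℝ) : ℝ := Real.sqrt (1 + (R 0 0)^2 + (R 0 1)^2)

/-- The squares of the coefficient functions. -/
def gS (k : Vec2) (R : Fin 2 → Fin 2 → ℝ) : ℝ :=
  2 * tS R + (if (1:ℝ)/2 ≤ (k 0)^2 then 1 else -1) * ((25/28) * R 0 0)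
    + (if (0:ℝ) ≤ k 0 * k 1 then 1 else -1) * ((25/96) * R 0 1)

lemma one_le_tS (R : Fin 2 → Fin 2 → ℝ) : 1 ≤ tS R := by
  rw [show (1:ℝ) = Real.sqrt 1 by simp]
  exact Real.sqrt_le_sqrt (by nlinarith [sq_nonneg (R 0 0), sq_nonneg (R 0 1)])

lemma absx_le_tS (R : Fin 2 → Fin 2 → ℝ) : |R 0 0| ≤ tS R := by
  rw [← Real.sqrt_sq_eq_abs]
  exact Real.sqrt_le_sqrt (by nlinarith [sq_nonneg (R 0 1)])

lemma absy_le_tS (R : Fin 2 → Fin 2 → ℝ) : |R 0 1| ≤ tS R := by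
  rw [← Real.sqrt_sq_eq_abs]
  exact Real.sqrt_le_sqrt (by nlinarith [sq_nonneg (R 0 0)])

lemma gS_pos (k : Vec2) (R : Fin 2 → Fin 2 → ℝ) : 0 < gS k R := by
  have h1 := one_le_tS R
  have hx := absx_le_tS R
  have hy := absy_le_tS R
  have hx1 := neg_abs_le (R 0 0); have hx2 := le_abs_self (R 0 0)
  have hy1 := neg_abs_le (R 0 1); have hy2 := le_abs_self (R 0 1)
  unfold gS
  split_ifs <;> linarith

lemma gS_contDiff (k : Vec2) : ContDiff ℝ (⊤ : ℕ∞) (gS k) := by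
  have p0 : ContDiff ℝ (⊤ : ℕ∞) (fun R : Fin 2 → Fin 2 → ℝ => R 0 0) :=
    ((ContinuousLinearMap.proj (R := ℝ) (φ := fun _ : Fin 2 => ℝ) 0).comp
      (ContinuousLinearMap.proj (R := ℝ) (φ := fun _ : Fin 2 => (Fin 2 → ℝ)) 0)).contDiff
  have p1 : ContDiff ℝ (⊤ : ℕ∞) (fun R : Fin 2 → Fin 2 → ℝ => R 0 1) :=
    ((ContinuousLinearMap.proj (R := ℝ) (φ := fun _ : Fin 2 => ℝ) 1).comp
      (ContinuousLinearMap.proj (R := ℝ) (φ := fun _ : Fin 2 => (Fin 2 → ℝ)) 0)).contDiff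
  have hq : ContDiff ℝ (⊤ : ℕ∞) (fun R : Fin 2 → Fin 2 → ℝ => 1 + (R 0 0)^2 + (R 0 1)^2) :=
    (contDiff_const.add (p0.pow 2)).add (p1.pow 2)
  have ht : ContDiff ℝ (⊤ : ℕ∞) tS := by
    rw [contDiff_iff_contDiffAt]
    intro R
    exact (hq.contDiffAt).sqrt (by positivity)
  unfold gS
  exact ((contDiff_const.mul ht).add (contDiff_const.mul (contDiff_const.mul p0))).add
    (contDiff_const.mul (contDiff_const.mul p1))


/-- geometric lemma. There are a constant `C > 0` and smooth positive
functions `γ_k`, `k ∈ Λ`, on the space `M` of real symmetric trace-free `2×2` matrices,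
with `γ_{−k} = γ_k`, `R = Σ_{k∈Λ} (γ_k(R))² (k ⊘ k)` and `γ_k(R) ≤ C(1+|R|)^{1/2}`. -/
theorem statement3 :
    ∃ C : ℝ, 0 < C ∧
    ∃ γ : Vec2 → (Fin 2 → Fin 2 → ℝ) → ℝ,
      (∀ k ∈ Λdir, ContDiff ℝ (⊤ : ℕ∞) (γ k)) ∧
      (∀ R : Fin 2 → Fin 2 → ℝ, (∀ i j, R i j = R j i) → R 0 0 + R 1 1 = 0 →
        (∀ k ∈ Λdir, 0 < γ k R) ∧
        (∀ k ∈ Λdir, γ (-k) R = γ k R) ∧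
        (R = ∑ k ∈ Λdir, (γ k R)^2 • ot k k) ∧
        (∀ k ∈ Λdir, γ k R ≤ C * Real.sqrt (1 + ‖R‖))) := by
  refine ⟨3, by norm_num, fun k R => Real.sqrt (gS k R), ?_, ?_⟩
  · intro k _
    rw [contDiff_iff_contDiffAt]
    intro R
    exact ((gS_contDiff k).contDiffAt).sqrt (gS_pos k R).ne'
  · intro R hsym htr
    refine ⟨fun k _ => Real.sqrt_pos.mpr (gS_pos k R), fun k _ => ?_, ?_, fun k _ => ?_⟩
    · have h : gS (-k) R = gS k R := by
        unfold gS
        rw [Pi.neg_apply, Pi.neg_apply, neg_sq, neg_mul_neg]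
      show Real.sqrt (gS (-k) R) = Real.sqrt (gS k R)
      rw [h]
    · have hsq : ∀ k : Vec2, (Real.sqrt (gS k R))^2 = gS k R :=
        fun k => Real.sq_sqrt (gS_pos k R).le
      rw [sum_Λdir]
      simp only [hsq]
      have h11 : R 1 1 = -(R 0 0) := by linarith
      have h10 : R 1 0 = R 0 1 := hsym 1 0
      funext i j
      fin_cases i <;> fin_cases j <;>
        (try norm_num [gS, ot, dotProduct, Fin.sum_univ_two, Pi.neg_apply,
          Pi.add_apply, Pi.smul_apply, smul_eq_mul]) <;>
        first
          | ring1
          | linarith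
    · have hn : (0:ℝ) ≤ ‖R‖ := norm_nonneg R
      have hx : |R 0 0| ≤ ‖R‖ :=
        le_trans (norm_le_pi_norm (R 0) 0) (norm_le_pi_norm R 0)
      have hy : |R 0 1| ≤ ‖R‖ :=
        le_trans (norm_le_pi_norm (R 0) 1) (norm_le_pi_norm R 0)
      have hx2 : (R 0 0)^2 ≤ ‖R‖^2 := by
        rw [← sq_abs]; exact pow_le_pow_left₀ (abs_nonneg _) hx 2
      have hy2 : (R 0 1)^2 ≤ ‖R‖^2 := by
        rw [← sq_abs]; exact pow_le_pow_left₀ (abs_nonneg _) hy 2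
      have ht : tS R ≤ 2 * (1 + ‖R‖) := by
        have h := Real.sqrt_le_sqrt
          (show 1 + (R 0 0)^2 + (R 0 1)^2 ≤ (2 * (1 + ‖R‖))^2 by nlinarith)
        rwa [Real.sqrt_sq (by positivity)] at h
      have hg : gS k R ≤ 9 * (1 + ‖R‖) := by
        have hx1 := neg_abs_le (R 0 0); have hx2 := le_abs_self (R 0 0)
        have hy1 := neg_abs_le (R 0 1); have hy2 := le_abs_self (R 0 1)
        unfold gS
        split_ifs <;> linarith
      calc Real.sqrt (gS k R) ≤ Real.sqrt (9 * (1 + ‖R‖)) := Real.sqrt_le_sqrt hg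
        _ = 3 * Real.sqrt (1 + ‖R‖) := by
            rw [show (9:ℝ) * (1 + ‖R‖) = 3^2 * (1 + ‖R‖) by norm_num,
              Real.sqrt_mul (by positivity), Real.sqrt_sq (by norm_num)]
end
end

section
/- Let Γ_* be the mollification of Γ by an even smooth nonnegative mollifier supported in (−1,1) with unit integral, where Γ(s) = s+1 for s > 0 and Γ(s) = 1 for s ≤ 0. Set k₁ = (3e₁+4e₂)/5, k₂ = (3e₁−4e₂)/5, k₃ = (4e₁+3e₂)/5, k₄ = (4e₁−3e₂)/5 and k_{−j} = −k_j for j = 1,2,3,4. Then for every real symmetric trace-free 2×2 matrix R with entries R₁₁, R₁₂ (so R₂₁ = R₁₂ and R₂₂ = −R₁₁): −R = (25/14·Γ_*(−R₁₁) + 25/48·Γ_*(R₁₂))·(k₁⊥ ⊘ k₁⊥ + k₋₁⊥ ⊘ k₋₁⊥) + (25/14·Γ_*(−R₁₁) + 25/48·Γ_*(−R₁₂))·(k₂⊥ ⊘ k₂⊥ + k₋₂⊥ ⊘ k₋₂⊥) + (25/14·Γ_*(R₁₁) + 25/48·Γ_*(R₁₂))·(k₃⊥ ⊘ k₃⊥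 + k₋₃⊥ ⊘ k₋₃⊥) + (25/14·Γ_*(R₁₁) + 25/48·Γ_*(−R₁₂))·(k₄⊥ ⊘ k₄⊥ + k₋₄⊥ ⊘ k₋₄⊥). -/
open MeasureTheory Real Filter Matrix
open scoped ENNReal NNReal

noncomputable section

/-- `Γ(s) = s+1` for `s > 0`, `Γ(s) = 1` for `s ≤ 0`. -/
def Γfun (s : ℝ) : ℝ := if 0 < s then s + 1 else 1

/-- Mollification `Γ_* = Γ * φ̃`. -/
def Γstar (φ : ℝ → ℝ) (s : ℝ) : ℝ := ∫ u : ℝ, Γfun (s - u) * φ u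

lemma Γfun_sub_neg (t : ℝ) : Γfun t - Γfun (-t) = t := by
  unfold Γfun
  rcases lt_trichotomy t 0 with h | h | h
  · rw [if_neg (by linarith), if_pos (by linarith)]; ring
  · simp [h]
  · rw [if_pos h, if_neg (by linarith)]; ring

lemma Γstar_key (φ : ℝ → ℝ)
    (hφ_smooth : ContDiff ℝ (⊤ : ℕ∞) φ)
    (hφ_even : ∀ s, φ (-s) = φ s)
    (hφ_nonneg : ∀ s, 0 ≤ φ s)
    (hφ_supp : Function.support φ ⊆ Set.Ioo (-1) 1)
    (hφ_int : (∫ u : ℝ, φ u) = 1) (s : ℝ) :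
    Γstar φ (-s) = Γstar φ s - s := by
  have hc : Continuous φ := hφ_smooth.continuous
  have hcs : HasCompactSupport φ := by
    apply HasCompactSupport.intro (isCompact_Icc (a := (-1:ℝ)) (b := 1))
    intro x hx
    by_contra h
    exact hx (Set.mem_of_mem_of_subset (Function.mem_support.2 h) hφ_supp
      |>.elim fun h1 h2 => ⟨le_of_lt h1, le_of_lt h2⟩)
  have hφint : Integrable φ := hc.integrable_of_hasCompactSupport hcs
  have hΓmeas : Measurable Γfun := by
    unfold Γfun
    exact Measurable.ite (measurableSet_lt measurable_const measurable_id)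
      (measurable_id.add_const 1) measurable_const
  have hΓbound : ∀ x : ℝ, |Γfun x| ≤ |x| + 1 := by
    intro x
    unfold Γfun
    split_ifs with h
    · rw [abs_of_pos (by linarith)]
      linarith [le_abs_self x]
    · rw [abs_one]; linarith [abs_nonneg x]
  have hint : ∀ g : ℝ → ℝ, Measurable g → (∀ u ∈ Set.Ioo (-1:ℝ) 1, |g u| ≤ |s| + 2) →
      Integrable (fun u => g u * φ u) := by
    intro g hgm hgb
    have hmeas : AEStronglyMeasurable (fun u => g u * φ u) volume :=
      (hgm.mul hc.measurable).aestronglyMeasurable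
    apply Integrable.mono (hφint.const_mul (|s| + 2)) hmeas
    filter_upwards with u
    by_cases hu : φ u = 0
    · simp only [hu, mul_zero, norm_zero]
      exact le_rfl
    · have hu' : u ∈ Set.Ioo (-1 : ℝ) 1 := hφ_supp (Function.mem_support.2 hu)
      rw [norm_mul, Real.norm_eq_abs, Real.norm_eq_abs, Real.norm_eq_abs,
        abs_mul, abs_of_nonneg (hφ_nonneg u), abs_of_nonneg (by positivity : (0:ℝ) ≤ |s| + 2)]
      exact mul_le_mul_of_nonneg_right (hgb u hu') (hφ_nonneg u)
  have hbound : ∀ t : ℝ, |t| ≤ |s| → ∀ u ∈ Set.Ioo (-1:ℝ) 1, |Γfun (t - u)| ≤ |s| + 2 := by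
    intro t ht u hu
    refine (hΓbound _).trans ?_
    have h1 : |t - u| ≤ |t| + |u| := abs_sub t u
    have h2 : |u| ≤ 1 := abs_le.2 ⟨le_of_lt hu.1, le_of_lt hu.2⟩
    linarith
  have hint1 : Integrable (fun u => Γfun (s - u) * φ u) :=
    hint _ (hΓmeas.comp (measurable_const.sub measurable_id))
      (hbound s le_rfl)
  have hint2 : Integrable (fun u => Γfun (u - s) * φ u) := by
    refine hint _ (hΓmeas.comp (measurable_id.sub measurable_const)) ?_
    intro u hu
    have : u - s = -(s - u) + 0 := by ring
    have h2 : |u - s| = |s - u| := abs_sub_comm u s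
    refine (hΓbound _).trans ?_
    have h1 : |s - u| ≤ |s| + |u| := abs_sub s u
    have h3 : |u| ≤ 1 := abs_le.2 ⟨le_of_lt hu.1, le_of_lt hu.2⟩
    rw [h2]
    linarith
  have hflip : Γstar φ (-s) = ∫ u : ℝ, Γfun (u - s) * φ u := by
    unfold Γstar
    rw [← integral_neg_eq_self (fun u => Γfun (u - s) * φ u) volume]
    congr 1
    funext u
    show Γfun (-s - u) * φ u = Γfun (-u - s) * φ (-u)
    rw [hφ_even, show (-s - u : ℝ) = -u - s by ring]
  have hg : Integrable (fun u : ℝ => u * φ u) :=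
    (continuous_id.mul hc).integrable_of_hasCompactSupport (hcs.mul_left)
  have hmoment : (∫ u : ℝ, u * φ u) = 0 := by
    have h1 : (∫ u : ℝ, (-u) * φ (-u)) = ∫ u : ℝ, u * φ u :=
      integral_neg_eq_self (fun u => u * φ u) volume
    have h2 : (∫ u : ℝ, (-u) * φ (-u)) = - ∫ u : ℝ, u * φ u := by
      rw [← integral_neg]
      congr 1
      funext u
      rw [hφ_even]
      ring
    linarith
  have hmain : Γstar φ s - Γstar φ (-s) = s := by
    rw [hflip]
    unfold Γstar
    rw [← integral_sub hint1 hint2]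
    have hEq : (fun u : ℝ => Γfun (s - u) * φ u - Γfun (u - s) * φ u)
        = fun u : ℝ => s * φ u - u * φ u := by
      funext u
      rw [show u - s = -(s - u) by ring]
      linear_combination (Γfun_sub_neg (s - u)) * φ u
    rw [hEq, integral_sub (hφint.const_mul s) hg, hmoment,
      integral_const_mul, hφ_int]
    ring
  linarith

/-- The explicit decomposition of `−R` for a symmetric trace-free
`2×2` matrix `R`, in terms of the mollified cutoff `Γ_*` and the tensors
`k_j⊥ ⊘ k_j⊥ + k_{−j}⊥ ⊘ k_{−j}⊥`. -/
theorem statement4 (φ : ℝ → ℝ)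
    (hφ_smooth : ContDiff ℝ (⊤ : ℕ∞) φ)
    (hφ_even : ∀ s, φ (-s) = φ s)
    (hφ_nonneg : ∀ s, 0 ≤ φ s)
    (hφ_supp : Function.support φ ⊆ Set.Ioo (-1) 1)
    (hφ_int : (∫ u : ℝ, φ u) = 1)
    (R11 R12 : ℝ) :
    (fun (k1 k2 k3 k4 : Vec2) (R : Fin 2 → Fin 2 → ℝ) =>
      -R =
        (25/14 * Γstar φ (-R11) + 25/48 * Γstar φ R12) •
          (ot (perp k1) (perp k1) + ot (perp (-k1)) (perp (-k1)))
        + (25/14 * Γstar φ (-R11) + 25/48 * Γstar φ (-R12)) •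
          (ot (perp k2) (perp k2) + ot (perp (-k2)) (perp (-k2)))
        + (25/14 * Γstar φ R11 + 25/48 * Γstar φ R12) •
          (ot (perp k3) (perp k3) + ot (perp (-k3)) (perp (-k3)))
        + (25/14 * Γstar φ R11 + 25/48 * Γstar φ (-R12)) •
          (ot (perp k4) (perp k4) + ot (perp (-k4)) (perp (-k4))))
      ![3/5, 4/5] ![3/5, -4/5] ![4/5, 3/5] ![4/5, -3/5]
      ![![R11, R12], ![R12, -R11]] := by
  have h1 := Γstar_key φ hφ_smooth hφ_even hφ_nonneg hφ_supp hφ_int R11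
  have h2 := Γstar_key φ hφ_smooth hφ_even hφ_nonneg hφ_supp hφ_int R12
  beta_reduce
  funext i j
  fin_cases i <;> fin_cases j <;>
    simp [ot, perp, dotProduct, Fin.sum_univ_two, h1, h2,
      Matrix.cons_val_zero, Matrix.cons_val_one, Matrix.head_cons] <;>
    ring
end
end

section
/- Let Γ(s) = s+1 for s > 0 and Γ(s) = 1 for s ≤ 0, and let φ̃ ∈ C^∞(ℝ) be an even function with φ̃ ≥ 0, supp φ̃ ⊆ (−1,1) and ∫_ℝ φ̃ = 1. Set Γ_* = Γ * φ̃. Then: (i) Γ_* ∈ C^∞(ℝ); (ii) 1 ≤ Γ_*(s) ≤ |s| + 2 for all s ∈ ℝ; and (iii) Γ_*(s) − Γ_*(−s) = s for all s ∈ ℝ. -/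
open MeasureTheory Real Filter
open scoped ENNReal NNReal

noncomputable section

lemma Γfun_eq (s : ℝ) : Γfun s = max s 0 + 1 := by
  unfold Γfun
  split_ifs with h
  · rw [max_eq_left h.le]
  · rw [max_eq_right (not_lt.mp h)]; ring

lemma Γfun_cont : Continuous Γfun := by
  have h : Γfun = fun s => max s 0 + 1 := funext Γfun_eq
  rw [h]
  exact (continuous_id.max continuous_const).add continuous_const

lemma Γfun_ge (s : ℝ) : 1 ≤ Γfun s := by
  rw [Γfun_eq]
  nlinarith [le_max_right s 0]

lemma Γfun_le (s : ℝ) : Γfun s ≤ |s| + 1 := by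
  rw [Γfun_eq]
  have := le_abs_self s
  have := abs_nonneg s
  have := max_le ‹s ≤ |s|› ‹0 ≤ |s|›
  linarith

lemma integrable_aux (ψ : ℝ → ℝ) (hc : Continuous ψ)
    (hs : Function.support ψ ⊆ Set.Ioo (-1 : ℝ) 1) : Integrable ψ := by
  apply hc.integrable_of_hasCompactSupport
  apply HasCompactSupport.intro (isCompact_Icc (a := (-1:ℝ)) (b := 1))
  intro x hx
  by_contra h
  exact hx (Set.Ioo_subset_Icc_self (hs h))

/-- Properties of the mollified cutoff `Γ_*`:
it is smooth, satisfies `1 ≤ Γ_*(s) ≤ |s| + 2`, and `Γ_*(s) − Γ_*(−s) = s`. -/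
theorem statement5 (φ : ℝ → ℝ)
    (hφ_smooth : ContDiff ℝ (⊤ : ℕ∞) φ)
    (hφ_even : ∀ s, φ (-s) = φ s)
    (hφ_nonneg : ∀ s, 0 ≤ φ s)
    (hφ_supp : Function.support φ ⊆ Set.Ioo (-1) 1)
    (hφ_int : (∫ u : ℝ, φ u) = 1) :
    ContDiff ℝ (⊤ : ℕ∞) (Γstar φ) ∧
    (∀ s : ℝ, 1 ≤ Γstar φ s ∧ Γstar φ s ≤ |s| + 2) ∧
    (∀ s : ℝ, Γstar φ s - Γstar φ (-s) = s) := by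
  have hφ_cont : Continuous φ := hφ_smooth.continuous
  have hφ_compact : HasCompactSupport φ := by
    apply HasCompactSupport.intro (isCompact_Icc (a := (-1:ℝ)) (b := 1))
    intro x hx
    by_contra h
    exact hx (Set.Ioo_subset_Icc_self (hφ_supp h))
  have hφ_integrable : Integrable φ := integrable_aux φ hφ_cont hφ_supp
  -- integrability of integrands
  have hint : ∀ s : ℝ, Integrable (fun u => Γfun (s - u) * φ u) := by
    intro s
    apply integrable_aux _ ((Γfun_cont.comp (continuous_const.sub continuous_id)).mul hφ_cont)
    intro u hu
    apply hφ_supp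
    simp only [Function.mem_support] at hu ⊢
    intro h
    exact hu (by simp [h])
  refine ⟨?_, ?_, ?_⟩
  · -- smoothness
    have heq : Γstar φ = convolution Γfun φ (ContinuousLinearMap.mul ℝ ℝ) volume := by
      funext s
      rw [convolution_eq_swap]
      rfl
    rw [heq]
    exact hφ_compact.contDiff_convolution_right _
      (Γfun_cont.locallyIntegrable) hφ_smooth
  · -- bounds
    intro s
    constructor
    · calc (1 : ℝ) = ∫ u, φ u := hφ_int.symm
        _ ≤ ∫ u, Γfun (s - u) * φ u := by
            apply integral_mono hφ_integrable (hint s)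
            intro u
            calc φ u = 1 * φ u := (one_mul _).symm
              _ ≤ Γfun (s - u) * φ u :=
                mul_le_mul_of_nonneg_right (Γfun_ge _) (hφ_nonneg u)
    · calc Γstar φ s ≤ ∫ u, (|s| + 2) * φ u := by
            apply integral_mono (hint s) (hφ_integrable.const_mul _)
            intro u
            by_cases hu : φ u = 0
            · simp [hu]
            · have hmem : u ∈ Set.Ioo (-1 : ℝ) 1 := hφ_supp hu
              have h1 : Γfun (s - u) ≤ |s - u| + 1 := Γfun_le _
              have h2 : |s - u| ≤ |s| + |u| := abs_sub s u
              have h3 : |u| ≤ 1 := by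
                rw [abs_le]; exact ⟨hmem.1.le, hmem.2.le⟩
              apply mul_le_mul_of_nonneg_right _ (hφ_nonneg u)
              linarith
        _ = (|s| + 2) * ∫ u, φ u := integral_const_mul _ _
        _ = |s| + 2 := by rw [hφ_int, mul_one]
  · -- antisymmetry
    intro s
    have key : Γstar φ (-s) = ∫ u : ℝ, Γfun (u - s) * φ u := by
      unfold Γstar
      rw [← integral_neg_eq_self (fun u => Γfun (u - s) * φ u)]
      congr 1
      funext u
      rw [hφ_even]
      ring_nf
    have hint2 : Integrable (fun u => Γfun (u - s) * φ u) := by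
      apply integrable_aux _ ((Γfun_cont.comp (continuous_id.sub continuous_const)).mul hφ_cont)
      intro u hu
      apply hφ_supp
      simp only [Function.mem_support] at hu ⊢
      intro h
      exact hu (by simp [h])
    have hodd : (∫ u : ℝ, u * φ u) = 0 := by
      have h1 : (∫ u : ℝ, -u * φ (-u)) = ∫ u : ℝ, u * φ u :=
        integral_neg_eq_self (fun u => u * φ u) volume
      have h2 : (∫ u : ℝ, -u * φ (-u)) = -∫ u : ℝ, u * φ u := by
        simp_rw [hφ_even, neg_mul, integral_neg]
      linarith [h1, h2]
    have hintu : Integrable (fun u : ℝ => u * φ u) := by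
      apply integrable_aux _ (continuous_id.mul hφ_cont)
      intro u hu
      apply hφ_supp
      simp only [Function.mem_support] at hu ⊢
      intro h
      exact hu (by simp [h])
    rw [key]
    unfold Γstar
    rw [← integral_sub (hint s) hint2]
    have : (fun u => Γfun (s - u) * φ u - Γfun (u - s) * φ u)
        = fun u => (s - u) * φ u := by
      funext u
      rw [← sub_mul, Γfun_eq, Γfun_eq]
      have : max (s - u) 0 - max (u - s) 0 = s - u := by
        have := max_zero_sub_max_neg_zero_eq_self (s - u)
        simpa [neg_sub] using this
      congr 1
      linarith
    rw [this]
    have : (fun u : ℝ => (s - u) * φ u) = fun u : ℝ => s * φ u - u * φ u := by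
      funext u; ring
    rw [this, integral_sub (hφ_integrable.const_mul s) hintu, hodd,
      integral_const_mul, hφ_int]
    ring
end
end

section
/- Let r, μ ∈ ℤ⁺ and λ, σ be such that σ^{−1} ∈ ℤ⁺, λ is a positive integer multiple of 5, and λσ is a positive integer multiple of 5, and let w_k = w_{k,λ,σ,r,μ} be the intermittent 2D stationary flows. Then: (i) for any coefficients {a_k ∈ ℂ : k ∈ Λ} with a_{−k} = conj(a_k) for all k ∈ Λ, the function W(t,x) = Σ_{k∈Λ} a_k w_k(t,x) is real valued; (ii) for every k ∈ Λ and every t, ⨍_{𝕋²} w_k(t,x) ⊘ w_{−k}(t,x) dx = −(k ⊘ k); and consequently (iii) if {γ_k : k ∈ Λ} are functions on the space M of real symmetric trace-free 2×2 matrices satisfying R = Σ_{k∈Λ} (γ_k(R))²(k ⊘ k) for all R ∈ M, then for every R ∈ M and every t, Σ_{k∈Λ} (γ_k(R))² ⨍_{𝕋²} w_k ⊘ w_{−k} dx = −R. -/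
open MeasureTheory Real Filter Matrix
open scoped ENNReal NNReal

noncomputable section

/-- The 2D stationary flow `b_{k,λ}(x) = i k⊥ e^{iλ k·x}`. -/
def bflow (k : Vec2) (l : ℝ) (x : Vec2) : Fin 2 → ℂ :=
  fun i => Complex.I * ((perp k i : ℝ) : ℂ) * Complex.exp (Complex.I * ((l * (k ⬝ᵥ x) : ℝ) : ℂ))

/-- Its potential `ψ_{k,λ}(x) = λ⁻¹ e^{iλ k·x}`. -/
def ψflow (k : Vec2) (l : ℝ) (x : Vec2) : ℂ :=
  ((l : ℂ))⁻¹ * Complex.exp (Complex.I * ((l * (k ⬝ᵥ x) : ℝ) : ℂ))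

/-- Partial derivative `∂_j` of a complex-valued function on `ℝ²`. -/
def pdC (j : Fin 2) (f : Vec2 → ℂ) : Vec2 → ℂ := fun x => fderiv ℝ f x (e2 j)

/-- The index set `Ω_r = {k ∈ ℤ² : |k₁| ≤ r, |k₂| ≤ r}`. -/
def Ωr (r : ℕ) : Finset (ℤ × ℤ) := Finset.Icc (-(r:ℤ)) r ×ˢ Finset.Icc (-(r:ℤ)) r

/-- The 2D Dirichlet kernel `D_r(x) = (2r+1)⁻¹ Σ_{k∈Ω_r} e^{ik·x}` on `𝕋²`. -/
def Dker (r : ℕ) (x : Vec2) : ℂ :=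
  (((2*(r:ℝ)+1) : ℝ) : ℂ)⁻¹ *
    ∑ k ∈ Ωr r, Complex.exp (Complex.I * (((k.1 : ℝ) * x 0 + (k.2 : ℝ) * x 1 : ℝ) : ℂ))

/-- The 2D Dirichlet kernel as a real-valued function of two real arguments. -/
def DkerR (r : ℕ) (a b : ℝ) : ℝ :=
  ((((2*(r:ℝ)+1) : ℝ) : ℂ)⁻¹ *
    ∑ k ∈ Ωr r, Complex.exp (Complex.I * (((k.1 : ℝ) * a + (k.2 : ℝ) * b : ℝ) : ℂ))).re

/-- The directed–rescaled Dirichlet kernel with temporal shift: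
`η_{k,λ,σ,r,μ}(t,x) = D_r(λσ(k·x + μt), λσ k⊥·x)` for `k ∈ Λ⁺`, and
`η_{k,λ,σ,r,μ} = η_{−k,λ,σ,r,μ}` for `k ∈ Λ⁻`. -/
def ηfun (k : Vec2) (l σ : ℝ) (r : ℕ) (μ : ℝ) (t : ℝ) (x : Vec2) : ℝ :=
  if k ∈ Λp then
    DkerR r (l * σ * (k ⬝ᵥ x + μ * t)) (l * σ * (perp k ⬝ᵥ x))
  else
    DkerR r (l * σ * ((-k) ⬝ᵥ x + μ * t)) (l * σ * (perp (-k) ⬝ᵥ x))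

/-- The intermittent 2D stationary flow `w_{k,λ,σ,r,μ}(t,x) = η_{k,λ,σ,r,μ}(t,x) b_{k,λ}(x)`. -/
def wflow (k : Vec2) (l σ : ℝ) (r : ℕ) (μ : ℝ) (t : ℝ) (x : Vec2) : Fin 2 → ℂ :=
  fun i => ((ηfun k l σ r μ t x : ℝ) : ℂ) * bflow k l x i

open MeasureTheory Real Filter Matrix
open scoped ENNReal NNReal
noncomputable section
namespace S11

lemma mem_Λp_iff (v : Vec2) : v ∈ Λp ↔
    v = ![3/5, 4/5] ∨ v = ![3/5, -4/5] ∨ v = ![4/5, 3/5] ∨ v = ![4/5, -3/5] := by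
  simp [Λp]

lemma Λp_pos {v : Vec2} (h : v ∈ Λp) : 0 < v 0 := by
  rcases (mem_Λp_iff v).1 h with h|h|h|h <;> subst h <;> norm_num

lemma mem_Λdir_iff (v : Vec2) : v ∈ Λdir ↔ v ∈ Λp ∨ -v ∈ Λp := by
  simp only [Λdir, Λm, Finset.mem_union, Finset.mem_image]
  constructor
  · rintro (h | ⟨a, ha, rfl⟩)
    · exact Or.inl h
    · right; simpa using ha
  · rintro (h | h)
    · exact Or.inl h
    · exact Or.inr ⟨-v, h, by simp⟩

lemma neg_mem_Λdir {v : Vec2} (h : v ∈ Λdir) : -v ∈ Λdir := by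
  rw [mem_Λdir_iff] at h ⊢
  simpa [or_comm] using h

lemma Λdir_cases {v : Vec2} (h : v ∈ Λdir) :
    ∃ a b : ℤ, (v 0 = a / 5 ∧ v 1 = b / 5) ∧ (a^2 + b^2 = 25) := by
  rcases (mem_Λdir_iff v).1 h with h | h <;>
    rcases (mem_Λp_iff _).1 h with h|h|h|h
  · exact ⟨3, 4, by rw [h]; norm_num, by norm_num⟩
  · exact ⟨3, -4, by rw [h]; norm_num, by norm_num⟩
  · exact ⟨4, 3, by rw [h]; norm_num, by norm_num⟩
  · exact ⟨4, -3, by rw [h]; norm_num, by norm_num⟩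
  · refine ⟨-3, -4, ⟨?_, ?_⟩, by norm_num⟩ <;>
    · have := congrFun h; simp only [Pi.neg_apply] at this
      first
      | (have h0 := this 0; simp at h0; linarith [h0])
      | (have h1 := this 1; simp at h1; linarith [h1])
  · exact ⟨-3, 4, ⟨by have := congrFun h 0; simp at this; linarith,
      by have := congrFun h 1; simp at this; linarith⟩, by norm_num⟩
  · exact ⟨-4, -3, ⟨by have := congrFun h 0; simp at this; linarith,
      by have := congrFun h 1; simp at this; linarith⟩, by norm_num⟩
  · exact ⟨-4, 3, ⟨by have := congrFun h 0; simp at this; linarith,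
      by have := congrFun h 1; simp at this; linarith⟩, by norm_num⟩

lemma unit_of_mem {v : Vec2} (h : v ∈ Λdir) : v 0 ^ 2 + v 1 ^ 2 = 1 := by
  obtain ⟨a, b, ⟨h0, h1⟩, hab⟩ := Λdir_cases h
  have : (a:ℝ)^2 + (b:ℝ)^2 = 25 := by exact_mod_cast congrArg (Int.cast : ℤ → ℝ) hab
  rw [h0, h1]; field_simp; linarith

end S11
namespace S11
variable {l σ : ℝ} {r : ℕ} {μ t : ℝ}

lemma not_mem_Λp_neg {v : Vec2} (h : v ∈ Λp) : ¬ (-v ∈ Λp) := by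
  intro h'
  have := Λp_pos h; have := Λp_pos h'
  simp only [Pi.neg_apply] at *; linarith

lemma ηfun_neg {k : Vec2} (h : k ∈ Λdir) (l σ : ℝ) (r : ℕ) (μ t : ℝ) (x : Vec2) :
    ηfun (-k) l σ r μ t x = ηfun k l σ r μ t x := by
  rcases (mem_Λdir_iff k).1 h with hk | hk
  · rw [ηfun, ηfun, if_pos hk, if_neg (not_mem_Λp_neg hk), neg_neg]
  · rw [ηfun, ηfun, if_pos hk, if_neg]
    intro h'; exact not_mem_Λp_neg h' (by simpa using hk)

lemma perp_neg (k : Vec2) : perp (-k) = -perp k := by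
  funext i; fin_cases i <;> simp [perp]

lemma bflow_neg (k : Vec2) (l : ℝ) (x : Vec2) (i : Fin 2) :
    bflow (-k) l x i = (starRingEnd ℂ) (bflow k l x i) := by
  have hd : ((l * ((-k) ⬝ᵥ x) : ℝ) : ℂ) = -((l * (k ⬝ᵥ x) : ℝ) : ℂ) := by
    push_cast [neg_dotProduct]; ring
  simp only [bflow, perp_neg, Pi.neg_apply, _root_.map_mul, Complex.conj_I,
    Complex.conj_ofReal, ← Complex.exp_conj, hd]
  push_cast
  rw [show Complex.I * -(((l:ℂ)) * ((k ⬝ᵥ x : ℝ):ℂ)) = -Complex.I * ((l:ℂ) * ((k ⬝ᵥ x:ℝ):ℂ)) by ring]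
  ring

lemma wflow_neg {k : Vec2} (h : k ∈ Λdir) (l σ : ℝ) (r : ℕ) (μ t : ℝ) (x : Vec2) (i : Fin 2) :
    wflow (-k) l σ r μ t x i = (starRingEnd ℂ) (wflow k l σ r μ t x i) := by
  rw [wflow, wflow, ηfun_neg h, bflow_neg, _root_.map_mul, Complex.conj_ofReal]

end S11
namespace S11

lemma disj : Disjoint Λp Λm := by
  rw [Finset.disjoint_left]
  intro v hv hv'
  simp only [Λm, Finset.mem_image] at hv'
  obtain ⟨a, ha, rfl⟩ := hv'
  exact not_mem_Λp_neg ha hv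

lemma part_i (l σ : ℝ) (r : ℕ) (μ t : ℝ) (a : Vec2 → ℂ)
    (ha : ∀ k ∈ Λdir, a (-k) = (starRingEnd ℂ) (a k)) (x : Vec2) (i : Fin 2) :
    (∑ k ∈ Λdir, a k * wflow k l σ r μ t x i).im = 0 := by
  have hsplit : ∑ k ∈ Λdir, a k * wflow k l σ r μ t x i
      = ∑ k ∈ Λp, (a k * wflow k l σ r μ t x i
          + a (-k) * wflow (-k) l σ r μ t x i) := by
    rw [Λdir, Finset.sum_union disj, Finset.sum_add_distrib]
    congr 1
    rw [Λm, Finset.sum_image (fun a _ b _ h => neg_injective h)]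
  rw [hsplit, Complex.im_sum]
  refine Finset.sum_eq_zero fun k hk => ?_
  have hkd : k ∈ Λdir := Finset.mem_union_left _ hk
  rw [ha k hkd, wflow_neg hkd, ← _root_.map_mul, Complex.add_conj]
  simp

end S11
namespace S11

lemma bflow_mul_conj (k : Vec2) (l : ℝ) (x : Vec2) (i j : Fin 2) :
    bflow k l x i * (starRingEnd ℂ) (bflow k l x j)
      = ((perp k i * perp k j : ℝ) : ℂ) := by
  simp only [bflow, _root_.map_mul, Complex.conj_I, Complex.conj_ofReal, ← Complex.exp_conj]
  rw [show Complex.I * ((perp k i:ℝ):ℂ) * Complex.exp (Complex.I * ((l * (k ⬝ᵥ x):ℝ):ℂ)) *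
      (-Complex.I * ((perp k j:ℝ):ℂ) * Complex.exp (-Complex.I * ((l * (k ⬝ᵥ x):ℝ):ℂ)))
      = (-(Complex.I*Complex.I)) * ((perp k i:ℝ):ℂ) * ((perp k j:ℝ):ℂ) *
        (Complex.exp (Complex.I * ((l * (k ⬝ᵥ x):ℝ):ℂ)) *
         Complex.exp (-(Complex.I * ((l * (k ⬝ᵥ x):ℝ):ℂ)))) by ring_nf]
  rw [← Complex.exp_add, add_neg_cancel, Complex.exp_zero, Complex.I_mul_I]
  push_cast; ring

lemma otC_pointwise {k : Vec2} (h : k ∈ Λdir) (l σ : ℝ) (r : ℕ) (μ t : ℝ) (x : Vec2) :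
    otC (wflow k l σ r μ t x) (wflow (-k) l σ r μ t x)
      = (((ηfun k l σ r μ t x)^2 : ℝ) : ℂ) • (fun i j => ((-(ot k k i j) : ℝ) : ℂ)) := by
  have hw : ∀ i j, wflow k l σ r μ t x i * wflow (-k) l σ r μ t x j
      = (((ηfun k l σ r μ t x)^2 * (perp k i * perp k j) : ℝ) : ℂ) := by
    intro i j
    rw [wflow_neg h]; simp only [wflow]
    rw [show (((ηfun k l σ r μ t x : ℝ):ℂ) * bflow k l x i) *
        (starRingEnd ℂ) (((ηfun k l σ r μ t x : ℝ):ℂ) * bflow k l x j)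
        = ((ηfun k l σ r μ t x : ℝ):ℂ) * (starRingEnd ℂ) ((ηfun k l σ r μ t x : ℝ):ℂ) *
          (bflow k l x i * (starRingEnd ℂ) (bflow k l x j)) by rw [_root_.map_mul]; ring]
    rw [Complex.conj_ofReal, bflow_mul_conj]
    push_cast; ring
  have hunit := unit_of_mem h
  funext i j
  have hdot : wflow k l σ r μ t x ⬝ᵥ wflow (-k) l σ r μ t x
      = (((ηfun k l σ r μ t x)^2 : ℝ) : ℂ) := by
    rw [dotProduct, Fin.sum_univ_two, hw, hw, ← Complex.ofReal_add, Complex.ofReal_inj]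
    have : perp k 0 * perp k 0 + perp k 1 * perp k 1 = 1 := by
      simp [perp]; nlinarith
    nlinarith [this]
  have hunitC : ((k 0 : ℝ):ℂ)^2 + ((k 1 : ℝ):ℂ)^2 = 1 := by exact_mod_cast hunit
  simp only [otC, hw, hdot, Pi.smul_apply, smul_eq_mul]
  fin_cases i <;> fin_cases j <;>
    simp [ot, dotProduct, Fin.sum_univ_two, perp] <;>
    push_cast <;>
    first
      | exact Or.inl (mul_comm _ _)
      | linear_combination (((ηfun k l σ r μ t x : ℝ):ℂ)^2/2) * hunitC

end S11
namespace S11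

-- 1D integral of an exponential with integer frequency
lemma int1D (n : ℤ) :
    ∫ x in Set.Ioc (0:ℝ) (2*π), Complex.exp (Complex.I * n * x)
      = if n = 0 then ((2*π : ℝ) : ℂ) else 0 := by
  rcases eq_or_ne n 0 with rfl | hn
  · simp only [Int.cast_zero, mul_zero, zero_mul, Complex.exp_zero, if_pos rfl]
    rw [setIntegral_const, Real.volume_real_Ioc_of_le (by positivity)]
    rw [show (2*π - 0 : ℝ) = 2*π by ring]
    simp
  · rw [if_neg hn, ← intervalIntegral.integral_of_le (by positivity)]
    have hc : Complex.I * (n:ℂ) ≠ 0 := by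
      refine mul_ne_zero Complex.I_ne_zero ?_
      exact_mod_cast hn
    rw [show (fun x : ℝ => Complex.exp (Complex.I * n * x)) = fun x : ℝ =>
      Complex.exp ((Complex.I * n) * x) from rfl]
    rw [integral_exp_mul_complex hc]
    have h2 : Complex.exp (Complex.I * (n:ℂ) * ((2*π : ℝ):ℂ)) = 1 := by
      rw [show Complex.I * (n:ℂ) * ((2*π:ℝ):ℂ) = (n:ℤ) * (2 * (π:ℂ) * Complex.I) by
        push_cast; ring]
      exact Complex.exp_int_mul_two_pi_mul_I n
    push_cast at h2 ⊢
    rw [h2]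
    simp

-- 2D product integral over Q2
lemma prod2D (f g : ℝ → ℂ) :
    ∫ x in Q2, f (x 0) * g (x 1)
      = (∫ s in Set.Ioc (0:ℝ) (2*π), f s) * ∫ s in Set.Ioc (0:ℝ) (2*π), g s := by
  have hQ : Q2 = (MeasurableEquiv.finTwoArrow (α := ℝ)) ⁻¹'
      (Set.Ioc (0:ℝ) (2*π) ×ˢ Set.Ioc (0:ℝ) (2*π)) := by
    ext x
    simp [Q2, MeasurableEquiv.finTwoArrow, MeasurableEquiv.piFinTwo, piFinTwoEquiv,
      Set.mem_pi, Fin.forall_fin_two]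
  rw [hQ, show (fun x : Vec2 => f (x 0) * g (x 1)) = fun x : Vec2 =>
      (fun p : ℝ × ℝ => f p.1 * g p.2) ((MeasurableEquiv.finTwoArrow (α := ℝ)) x) from rfl]
  rw [(volume_preserving_finTwoArrow ℝ).setIntegral_preimage_emb
    (MeasurableEquiv.finTwoArrow (α := ℝ)).measurableEmbedding
    (fun p : ℝ × ℝ => f p.1 * g p.2) _]
  rw [Measure.volume_eq_prod, setIntegral_prod_mul]

end S11
namespace S11

lemma int2D (m n : ℤ) (c : ℝ) :
    ∫ x in Q2, Complex.exp (Complex.I * (((m:ℝ) * x 0 + (n:ℝ) * x 1 + c : ℝ) : ℂ))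
      = if m = 0 ∧ n = 0 then ((4*π^2 : ℝ):ℂ) * Complex.exp (Complex.I * (c:ℝ)) else 0 := by
  have hint : ∀ x : Vec2, Complex.exp (Complex.I * (((m:ℝ) * x 0 + (n:ℝ) * x 1 + c : ℝ) : ℂ))
      = Complex.exp (Complex.I * (c:ℝ)) *
        ((fun s : ℝ => Complex.exp (Complex.I * m * s)) (x 0) *
         (fun s : ℝ => Complex.exp (Complex.I * n * s)) (x 1)) := by
    intro x
    rw [← Complex.exp_add, ← Complex.exp_add]
    congr 1
    push_cast
    ring
  simp only [hint]
  rw [integral_const_mul, prod2D (fun s : ℝ => Complex.exp (Complex.I * m * s))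
    (fun s : ℝ => Complex.exp (Complex.I * n * s)), int1D, int1D]
  rcases eq_or_ne m 0 with rfl | hm
  · rcases eq_or_ne n 0 with rfl | hn
    · rw [if_pos (⟨rfl, rfl⟩ : (0:ℤ) = 0 ∧ (0:ℤ) = 0)]
      push_cast
      ring
    · rw [if_neg hn]
      simp [hn]
  · rw [if_neg hm]
    simp [hm]

end S11
namespace S11

lemma sum_Ωr_neg (r : ℕ) (f : ℤ × ℤ → ℂ) :
    ∑ p ∈ Ωr r, f (-p) = ∑ p ∈ Ωr r, f p := by
  refine Finset.sum_equiv (Equiv.neg (ℤ × ℤ)) (fun p => ?_) (fun p _ => rfl)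
  simp only [Ωr, Finset.mem_product, Finset.mem_Icc, Equiv.neg_apply, Prod.fst_neg,
    Prod.snd_neg]
  omega

lemma DkerR_complex (r : ℕ) (a b : ℝ) :
    ((DkerR r a b : ℝ) : ℂ) = (((2*(r:ℝ)+1) : ℝ) : ℂ)⁻¹ *
      ∑ p ∈ Ωr r, Complex.exp (Complex.I * (((p.1 : ℝ) * a + (p.2 : ℝ) * b : ℝ) : ℂ)) := by
  set z : ℂ := (((2*(r:ℝ)+1) : ℝ) : ℂ)⁻¹ *
      ∑ p ∈ Ωr r, Complex.exp (Complex.I * (((p.1 : ℝ) * a + (p.2 : ℝ) * b : ℝ) : ℂ)) with hz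
  have hconj : (starRingEnd ℂ) z = z := by
    rw [hz, _root_.map_mul, map_inv₀, Complex.conj_ofReal, map_sum]
    congr 1
    calc ∑ p ∈ Ωr r, (starRingEnd ℂ) (Complex.exp (Complex.I * (((p.1 : ℝ) * a + (p.2 : ℝ) * b : ℝ) : ℂ)))
        = ∑ p ∈ Ωr r, Complex.exp (Complex.I * ((((-p).1 : ℝ) * a + ((-p).2 : ℝ) * b : ℝ) : ℂ)) := by
          refine Finset.sum_congr rfl fun p _ => ?_
          rw [← Complex.exp_conj, _root_.map_mul, Complex.conj_I, Complex.conj_ofReal]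
          congr 1
          push_cast [Prod.fst_neg, Prod.snd_neg]
          ring
      _ = ∑ p ∈ Ωr r, Complex.exp (Complex.I * (((p.1 : ℝ) * a + (p.2 : ℝ) * b : ℝ) : ℂ)) :=
          sum_Ωr_neg r (fun p => Complex.exp (Complex.I * (((p.1 : ℝ) * a + (p.2 : ℝ) * b : ℝ) : ℂ)))
  have : ((z.re : ℝ) : ℂ) = z := Complex.conj_eq_iff_re.mp hconj
  rw [← this, hz]
  rfl

lemma integrableOn_Q2 {f : Vec2 → ℂ} (hf : Continuous f) : IntegrableOn f Q2 := by
  have hK : IsCompact (Set.univ.pi fun _ : Fin 2 => Set.Icc (0:ℝ) (2*π)) :=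
    isCompact_univ_pi fun _ => isCompact_Icc
  exact (hf.continuousOn.integrableOn_compact hK).mono_set
    (Set.pi_mono fun i _ => Set.Ioc_subset_Icc_self)

end S11
namespace S11

lemma core_integral {k : Vec2} (hk : k ∈ Λdir) (l σ : ℝ) {N : ℕ} (hN : 0 < N)
    (hlσ : l * σ = 5 * N) (r : ℕ) (c0 : ℝ) :
    ∫ x in Q2, (((DkerR r (l*σ*(k ⬝ᵥ x + c0)) (l*σ*(perp k ⬝ᵥ x)))^2 : ℝ) : ℂ)
      = ((4*π^2 : ℝ) : ℂ) := by
  obtain ⟨a, b, ⟨h0, h1⟩, hab⟩ := Λdir_cases hk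
  have hNZ : ((N:ℤ)) ≠ 0 := by exact_mod_cast hN.ne'
  set C : ℂ := (((2*(r:ℝ)+1) : ℝ) : ℂ)⁻¹ with hC
  set m : ℤ × ℤ → ℤ × ℤ → ℤ :=
    fun p q => (N:ℤ) * (a * (p.1 + q.1) - b * (p.2 + q.2)) with hm
  set n : ℤ × ℤ → ℤ × ℤ → ℤ :=
    fun p q => (N:ℤ) * (b * (p.1 + q.1) + a * (p.2 + q.2)) with hn
  set cc : ℤ × ℤ → ℤ × ℤ → ℝ := fun p q => ((p.1 + q.1 : ℤ) : ℝ) * (l*σ*c0) with hcc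
  have key : ∀ x : Vec2, (((DkerR r (l*σ*(k ⬝ᵥ x + c0)) (l*σ*(perp k ⬝ᵥ x)))^2 : ℝ) : ℂ)
      = C^2 * ∑ p ∈ Ωr r, ∑ q ∈ Ωr r,
          Complex.exp (Complex.I *
            ((((m p q : ℤ):ℝ) * x 0 + ((n p q : ℤ):ℝ) * x 1 + cc p q : ℝ) : ℂ)) := by
    intro x
    rw [Complex.ofReal_pow, DkerR_complex, mul_pow]
    congr 1
    rw [pow_two, Finset.sum_mul_sum]
    refine Finset.sum_congr rfl fun p _ => Finset.sum_congr rfl fun q _ => ?_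
    rw [← Complex.exp_add, ← mul_add, ← Complex.ofReal_add]
    congr 2
    have hkx : k ⬝ᵥ x = (a/5) * x 0 + (b/5) * x 1 := by
      rw [dotProduct, Fin.sum_univ_two, h0, h1]
    have hpx : perp k ⬝ᵥ x = -(b/5) * x 0 + (a/5) * x 1 := by
      rw [dotProduct, Fin.sum_univ_two]
      simp [perp, h0, h1]
    simp only [hm, hn, hcc]
    rw [hkx, hpx, hlσ]
    push_cast
    ring
  simp only [key]
  rw [integral_const_mul]
  have hcont : ∀ (m' n' : ℤ) (c' : ℝ), Continuous fun x : Vec2 =>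
      Complex.exp (Complex.I * (((m' : ℝ) * x 0 + (n' : ℝ) * x 1 + c' : ℝ) : ℂ)) := by
    intro m' n' c'
    apply Complex.continuous_exp.comp
    apply continuous_const.mul
    apply Complex.continuous_ofReal.comp
    fun_prop
  rw [integral_finset_sum _ (fun p _ => by
    apply integrableOn_Q2
    exact continuous_finset_sum _ (fun q _ => hcont (m p q) (n p q) (cc p q)))]
  have hsum : ∀ p ∈ Ωr r, (∫ x in Q2, ∑ q ∈ Ωr r,
      Complex.exp (Complex.I *
        ((((m p q : ℤ):ℝ) * x 0 + ((n p q : ℤ):ℝ) * x 1 + cc p q : ℝ) : ℂ)))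
      = ∑ q ∈ Ωr r, if q = -p then ((4*π^2 : ℝ) : ℂ) else 0 := by
    intro p _
    rw [integral_finset_sum _ (fun q _ => integrableOn_Q2 (hcont (m p q) (n p q) (cc p q)))]
    refine Finset.sum_congr rfl fun q _ => ?_
    rw [int2D]
    rcases eq_or_ne q (-p) with rfl | hq
    · rw [if_pos, if_pos rfl]
      · rw [hcc]
        simp
      · constructor
        · rw [hm]; simp
        · rw [hn]; simp
    · rw [if_neg, if_neg hq]
      rintro ⟨hm0, hn0⟩
      rw [hm] at hm0; rw [hn] at hn0
      simp only at hm0 hn0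
      set u : ℤ := p.1 + q.1
      set v : ℤ := p.2 + q.2
      have e1 : a * u - b * v = 0 := by
        rcases mul_eq_zero.mp hm0 with h | h
        · exact absurd h hNZ
        · exact h
      have e2 : b * u + a * v = 0 := by
        rcases mul_eq_zero.mp hn0 with h | h
        · exact absurd h hNZ
        · exact h
      have hu : 25 * u = 0 := by linear_combination a * e1 + b * e2 - u * hab
      have hv : 25 * v = 0 := by linear_combination a * e2 - b * e1 - v * hab
      apply hq
      have : q.1 = -p.1 ∧ q.2 = -p.2 := by omega
      exact Prod.ext this.1 this.2
  rw [Finset.sum_congr rfl hsum]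
  have hmem : ∀ p ∈ Ωr r, -p ∈ Ωr r := by
    intro p hp
    simp only [Ωr, Finset.mem_product, Finset.mem_Icc, Prod.fst_neg, Prod.snd_neg] at hp ⊢
    omega
  have hstep : ∀ p ∈ Ωr r, (∑ q ∈ Ωr r, if q = -p then ((4*π^2 : ℝ) : ℂ) else 0)
      = ((4*π^2 : ℝ) : ℂ) := by
    intro p hp
    rw [Finset.sum_ite_eq' (Ωr r) (-p) (fun _ => ((4*π^2 : ℝ) : ℂ))]
    exact if_pos (hmem p hp)
  rw [Finset.sum_congr rfl hstep, Finset.sum_const]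
  have hcard : (Ωr r).card = (2*r+1)^2 := by
    rw [Ωr, Finset.card_product, Int.card_Icc]
    have : ((r:ℤ) + 1 - -(r:ℤ)).toNat = 2*r+1 := by omega
    rw [this]; ring
  rw [hcard, nsmul_eq_mul, hC]
  have h2r : ((2*(r:ℝ)+1) : ℝ) ≠ 0 := by positivity
  have h2rC : (((2*(r:ℝ)+1) : ℝ) : ℂ) ≠ 0 := by exact_mod_cast h2r
  have hcast : (((2*r+1)^2 : ℕ) : ℂ) = (((2*(r:ℝ)+1) : ℝ) : ℂ)^2 := by push_cast; ring
  rw [hcast, inv_pow, inv_mul_cancel_left₀ (pow_ne_zero 2 h2rC)]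

end S11
namespace S11

lemma part_ii {k : Vec2} (hk : k ∈ Λdir) (l σ : ℝ) {N : ℕ} (hN : 0 < N)
    (hlσ : l * σ = 5 * N) (r : ℕ) (μ t : ℝ) :
    ((4*π^2 : ℝ)⁻¹ •
        ∫ x in Q2, otC (wflow k l σ r μ t x) (wflow (-k) l σ r μ t x))
      = fun i j => ((-(ot k k i j) : ℝ) : ℂ) := by
  have hrw : (fun x => otC (wflow k l σ r μ t x) (wflow (-k) l σ r μ t x))
      = fun x => (((ηfun k l σ r μ t x)^2 : ℝ) : ℂ) •
          (fun i j => ((-(ot k k i j) : ℝ) : ℂ)) := by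
    funext x
    exact otC_pointwise hk l σ r μ t x
  rw [hrw, integral_smul_const]
  have hint : (∫ x in Q2, (((ηfun k l σ r μ t x)^2 : ℝ) : ℂ)) = ((4*π^2 : ℝ) : ℂ) := by
    by_cases hkp : k ∈ Λp
    · simp only [ηfun, if_pos hkp]
      exact core_integral hk l σ hN hlσ r (μ*t)
    · simp only [ηfun, if_neg hkp]
      exact core_integral (neg_mem_Λdir hk) l σ hN hlσ r (μ*t)
  rw [hint]
  funext i j
  have hπ : (4*π^2 : ℝ) ≠ 0 := by positivity
  simp only [Pi.smul_apply, smul_eq_mul, Complex.real_smul]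
  rw [← mul_assoc, ← Complex.ofReal_mul, inv_mul_cancel₀ hπ]
  simp

end S11


/-- Reality of `W = Σ_k a_k w_k` for conjugate-symmetric coefficients,
the identity `⨍ w_k ⊘ w_{−k} dx = −(k ⊘ k)`, and the consequence
`Σ_k (γ_k(R))² ⨍ w_k ⊘ w_{−k} dx = −R`. -/
theorem statement11 (r μ : ℕ) (hr : 0 < r) (hμ : 0 < μ) (l σ : ℝ)
    (hσ : ∃ n : ℕ, 0 < n ∧ σ⁻¹ = (n : ℝ))
    (hl : ∃ n : ℕ, 0 < n ∧ l = 5 * n)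
    (hlσ : ∃ n : ℕ, 0 < n ∧ l * σ = 5 * n) :
    -- (i) `W` is real valued
    (∀ a : Vec2 → ℂ, (∀ k ∈ Λdir, a (-k) = (starRingEnd ℂ) (a k)) →
      ∀ (t : ℝ) (x : Vec2) (i : Fin 2),
        (∑ k ∈ Λdir, a k * wflow k l σ r (μ : ℝ) t x i).im = 0) ∧
    -- (ii) `⨍ w_k ⊘ w_{−k} dx = −(k ⊘ k)`
    (∀ k ∈ Λdir, ∀ t : ℝ,
      ((4*π^2 : ℝ)⁻¹ •
        ∫ x in Q2, otC (wflow k l σ r (μ : ℝ) t x) (wflow (-k) l σ r (μ : ℝ) t x))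
        = fun i j => ((-(ot k k i j) : ℝ) : ℂ)) ∧
    -- (iii) consequence for the geometric coefficients
    (∀ γ : Vec2 → (Fin 2 → Fin 2 → ℝ) → ℝ,
      (∀ R : Fin 2 → Fin 2 → ℝ, (∀ i j, R i j = R j i) → R 0 0 + R 1 1 = 0 →
        R = ∑ k ∈ Λdir, (γ k R)^2 • ot k k) →
      ∀ R : Fin 2 → Fin 2 → ℝ, (∀ i j, R i j = R j i) → R 0 0 + R 1 1 = 0 →
      ∀ t : ℝ,
        (∑ k ∈ Λdir, (γ k R)^2 •
          ((4*π^2 : ℝ)⁻¹ •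
            ∫ x in Q2, otC (wflow k l σ r (μ : ℝ) t x) (wflow (-k) l σ r (μ : ℝ) t x)))
          = fun i j => ((-(R i j) : ℝ) : ℂ)) := by
  
  obtain ⟨N, hN, hlσ⟩ := hlσ
  refine ⟨fun a ha t x i => S11.part_i l σ r (μ:ℝ) t a ha x i,
    fun k hk t => S11.part_ii hk l σ hN hlσ r (μ:ℝ) t, ?_⟩
  intro γ hγ R hsym htr t
  have hrw : ∀ k ∈ Λdir, ((4*π^2 : ℝ)⁻¹ •
      ∫ x in Q2, otC (wflow k l σ r (μ : ℝ) t x) (wflow (-k) l σ r (μ : ℝ) t x))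
      = fun i j => ((-(ot k k i j) : ℝ) : ℂ) :=
    fun k hk => S11.part_ii hk l σ hN hlσ r (μ:ℝ) t
  rw [Finset.sum_congr rfl fun k hk => by rw [hrw k hk]]
  funext i j
  have hR := congrFun (congrFun (hγ R hsym htr) i) j
  simp only [Finset.sum_apply, Pi.smul_apply, smul_eq_mul] at hR
  simp only [Finset.sum_apply, Pi.smul_apply, Complex.real_smul]
  push_cast
  rw [show -((R i j : ℝ) : ℂ) = -((((∑ k ∈ Λdir, (γ k R)^2 * ot k k i j) : ℝ)) : ℂ) by rw [← hR]]
  push_cast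
  rw [← Finset.sum_neg_distrib]
  refine Finset.sum_congr rfl fun k _ => ?_
  ring
end
end
end

section
/- There exists an absolute constant C such that for every κ ∈ ℤ⁺ and all f, g ∈ C^∞(𝕋²) with g being (2π/κ)-periodic in each coordinate (i.e. g(x + (2π/κ)e_j) = g(x) for j = 1,2 and all x), one has ‖fg‖_{L²(𝕋²)} ≤ ‖f‖_{L²(𝕋²)} (⨍_{𝕋²} |g|² dx)^{1/2} + C κ^{−1/2} ‖f‖_{C¹(𝕋²)} ‖g‖_{L²(𝕋²)}. -/
open MeasureTheory Real Filter Matrix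
open scoped ENNReal NNReal

noncomputable section

namespace S13

lemma e2_apply (j i : Fin 2) : e2 j i = if i = j then 1 else 0 := by
  simp [e2, Pi.single_apply]

lemma per_nat {u : Vec2 → ℝ} {T : ℝ} (hp : ∀ x j, u (x + T • e2 j) = u x) :
    ∀ (n : ℕ) (x : Vec2) (j : Fin 2), u (x + ((n : ℝ) * T) • e2 j) = u x := by
  intro n
  induction n with
  | zero => intro x j; simp
  | succ n ih =>
    intro x j
    have hx : x + (((n:ℕ)+1 : ℝ) * T) • e2 j = (x + T • e2 j) + ((n : ℝ) * T) • e2 j := by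
      module
    push_cast at ih ⊢
    rw [hx, ih, hp]

lemma per_int {u : Vec2 → ℝ} {T : ℝ} (hp : ∀ x j, u (x + T • e2 j) = u x) :
    ∀ (n : ℤ) (x : Vec2) (j : Fin 2), u (x + ((n : ℝ) * T) • e2 j) = u x := by
  intro n
  induction n using Int.induction_on with
  | zero => intro x j; simp
  | succ n ih =>
    intro x j
    have hx : x + (((n:ℝ)+1) * T) • e2 j = (x + T • e2 j) + ((n : ℝ) * T) • e2 j := by
      module
    push_cast at ih ⊢
    rw [hx, ih, hp]
  | pred n ih =>
    intro x j
    have hx : (x + ((-(n:ℝ)-1) * T) • e2 j) + T • e2 j = x + ((-(n:ℝ)) * T) • e2 j := by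
      module
    have h1 := hp (x + ((-(n:ℝ)-1) * T) • e2 j) j
    rw [hx] at h1
    have h2 : u (x + ((-(n:ℝ)) * T) • e2 j) = u x := by
      have h3 := ih x j; push_cast at h3; exact h3
    push_cast
    rw [← h1, h2]

lemma reduce_exists {u : Vec2 → ℝ} (hp : ∀ x j, u (x + (2*π) • e2 j) = u x) (x : Vec2) :
    ∃ y ∈ Set.Icc (0 : Vec2) (fun _ => 2*π), u y = u x := by
  have hT : (0:ℝ) < 2*π := by positivity
  set n : Fin 2 → ℤ := fun j => ⌊x j / (2*π)⌋ with hn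
  set y : Vec2 := fun j => x j - ⌊x j / (2*π)⌋ * (2*π) with hy
  refine ⟨y, ⟨fun j => ?_, fun j => ?_⟩, ?_⟩
  · exact Int.sub_floor_div_mul_nonneg (x j) hT
  · exact (Int.sub_floor_div_mul_lt (x j) hT).le
  · have hx : x = (y + ((n 0 : ℝ) * (2*π)) • e2 0) + ((n 1 : ℝ) * (2*π)) • e2 1 := by
      funext i
      fin_cases i <;> simp [hy, hn, e2_apply] <;> ring
    conv_rhs => rw [hx]
    rw [per_int hp, per_int hp]

lemma bdd_le_iSup {u : Vec2 → ℝ} (hc : Continuous u)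
    (hp : ∀ x j, u (x + (2*π) • e2 j) = u x) (x : Vec2) : u x ≤ ⨆ y, u y := by
  have hK : IsCompact (Set.Icc (0:Vec2) (fun _ => 2*π)) := isCompact_Icc
  have h1 : Set.range u ⊆ u '' (Set.Icc 0 (fun _ => 2*π)) := by
    rintro _ ⟨z, rfl⟩
    obtain ⟨y, hy, hyx⟩ := reduce_exists hp z
    exact ⟨y, hy, hyx⟩
  have hbdd : BddAbove (Set.range u) := ((hK.image hc).bddAbove).mono h1
  exact le_ciSup hbdd x

lemma Q2_subset_Icc : Q2 ⊆ Set.Icc (0 : Vec2) (fun _ => 2*π) := by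
  intro x hx
  simp only [Q2, Set.mem_pi, Set.mem_univ, forall_true_left, Set.mem_Ioc] at hx
  exact ⟨fun j => (hx j).1.le, fun j => (hx j).2⟩

lemma integrableOn_of_subset_Icc {u : Vec2 → ℝ} (hc : Continuous u) {s : Set Vec2}
    {a b : Vec2} (hs : s ⊆ Set.Icc a b) : IntegrableOn u s :=
  (hc.continuousOn.integrableOn_compact isCompact_Icc).mono_set hs

lemma vec_pair_cont : Continuous (fun p : ℝ × ℝ => (![p.1, p.2] : Vec2)) := by
  apply continuous_pi
  intro i
  fin_cases i
  · simpa using continuous_fst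
  · simpa using continuous_snd

lemma integral_Q2_eq (w : Vec2 → ℝ) (hcw : Continuous w) :
    ∫ x in Q2, w x
      = ∫ s in Set.Ioc (0:ℝ) (2*π), ∫ t in Set.Ioc (0:ℝ) (2*π), w ![s, t] := by
  set E := MeasurableEquiv.piFinTwo (fun _ : Fin 2 => ℝ) with hE
  have hmp : MeasurePreserving E volume volume := volume_preserving_piFinTwo _
  have hsym : ∀ p : ℝ × ℝ, E.symm p = ![p.1, p.2] := by
    intro p
    funext i
    fin_cases i <;> rfl
  have hpre : Q2 = E ⁻¹' ((Set.Ioc (0:ℝ) (2*π)) ×ˢ (Set.Ioc (0:ℝ) (2*π))) := by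
    ext x
    simp only [Q2, Set.mem_pi, Set.mem_univ, forall_true_left, Set.mem_preimage,
      Set.mem_prod]
    constructor
    · intro hx; exact ⟨hx 0, hx 1⟩
    · rintro ⟨h0, h1⟩ j; fin_cases j <;> assumption
  have h1 : ∫ x in Q2, w x = ∫ p in (Set.Ioc (0:ℝ) (2*π)) ×ˢ (Set.Ioc (0:ℝ) (2*π)),
      w (E.symm p) := by
    rw [hpre]
    rw [← hmp.setIntegral_preimage_emb E.measurableEmbedding (fun p => w (E.symm p))]
    congr 1
    funext x
    rw [E.symm_apply_apply]
  rw [h1]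
  have hint : IntegrableOn (fun p : ℝ × ℝ => w (E.symm p))
      ((Set.Ioc (0:ℝ) (2*π)) ×ˢ (Set.Ioc (0:ℝ) (2*π))) := by
    have hc2 : Continuous fun p : ℝ × ℝ => w (E.symm p) := by
      simp only [hsym]
      exact hcw.comp vec_pair_cont
    have hcpt : IsCompact ((Set.Icc (0:ℝ) (2*π)) ×ˢ (Set.Icc (0:ℝ) (2*π))) :=
      isCompact_Icc.prod isCompact_Icc
    exact (hc2.continuousOn.integrableOn_compact hcpt).mono_set
      (Set.prod_mono Set.Ioc_subset_Icc_self Set.Ioc_subset_Icc_self)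
  rw [Measure.volume_eq_prod]
  rw [MeasureTheory.setIntegral_prod _ (by rwa [← Measure.volume_eq_prod])]
  simp only [hsym]

lemma transl_inv {u : Vec2 → ℝ} (hc : Continuous u)
    (hp : ∀ x j, u (x + (2*π) • e2 j) = u x) (v : Vec2) :
    ∫ x in Q2, u (x + v) = ∫ x in Q2, u x := by
  have h2π : (0:ℝ) ≤ 2*π := by positivity
  have hvadd : ∀ (s t : ℝ), (![s, t] : Vec2) + v = ![s + v 0, t + v 1] := by
    intro s t
    funext i
    fin_cases i <;> simp
  have hper1 : ∀ a : ℝ, Function.Periodic (fun t => u ![a, t]) (2*π) := by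
    intro a t
    have : (![a, t + 2*π] : Vec2) = ![a, t] + (2*π) • e2 1 := by
      funext i; fin_cases i <;> simp [e2_apply]
    simp only [this, hp]
  have hper0 : ∀ t : ℝ, Function.Periodic (fun s => u ![s, t]) (2*π) := by
    intro t a
    have : (![a + 2*π, t] : Vec2) = ![a, t] + (2*π) • e2 0 := by
      funext i; fin_cases i <;> simp [e2_apply]
    simp only [this, hp]
  have key : ∀ (c : ℝ) (F : ℝ → ℝ), Function.Periodic F (2*π) →
      ∫ t in Set.Ioc (0:ℝ) (2*π), F (t + c) = ∫ t in Set.Ioc (0:ℝ) (2*π), F t := by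
    intro c F hF
    rw [← intervalIntegral.integral_of_le h2π, ← intervalIntegral.integral_of_le h2π,
      intervalIntegral.integral_comp_add_right F c]
    have := hF.intervalIntegral_add_eq c 0
    simpa [zero_add, add_comm] using this
  rw [integral_Q2_eq (fun x => u (x + v)) (hc.comp (continuous_id.add continuous_const)),
    integral_Q2_eq u hc]
  simp only [hvadd]
  have hinner : ∀ s : ℝ, ∫ t in Set.Ioc (0:ℝ) (2*π), u ![s + v 0, t + v 1]
      = ∫ t in Set.Ioc (0:ℝ) (2*π), u ![s + v 0, t] :=
    fun s => key (v 1) (fun t => u ![s + v 0, t]) (hper1 _)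
  simp only [hinner]
  exact key (v 0) (fun s => ∫ t in Set.Ioc (0:ℝ) (2*π), u ![s, t])
    (fun a => by simp only [hper0 _ a])

lemma Ioc_eq_iUnion (κ : ℕ) (hκ : 0 < κ) {h : ℝ} (hh : 0 < h) :
    Set.Ioc (0:ℝ) (κ * h) = ⋃ m : Fin κ, Set.Ioc ((m:ℝ)*h) ((m:ℝ)*h + h) := by
  ext t
  simp only [Set.mem_Ioc, Set.mem_iUnion]
  constructor
  · rintro ⟨ht0, htκ⟩
    have hpos : 0 < t / h := div_pos ht0 hh
    have hn1 : 1 ≤ ⌈t / h⌉₊ := Nat.one_le_iff_ne_zero.mpr (by positivity)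
    have hnκ : ⌈t / h⌉₊ ≤ κ := Nat.ceil_le.mpr (by rw [div_le_iff₀ hh]; linarith)
    refine ⟨⟨⌈t / h⌉₊ - 1, by omega⟩, ?_, ?_⟩
    · have h1 : ((⌈t / h⌉₊ : ℝ) - 1) < t / h := by
        have := Nat.ceil_lt_add_one hpos.le
        linarith
      have hcast : ((⌈t / h⌉₊ - 1 : ℕ) : ℝ) = (⌈t / h⌉₊ : ℝ) - 1 := by
        push_cast [hn1]; ring
      rw [Fin.val_mk, hcast, ← lt_div_iff₀ hh]
      exact h1
    · have h2 : t / h ≤ (⌈t / h⌉₊ : ℝ) := Nat.le_ceil _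
      have hcast : ((⌈t / h⌉₊ - 1 : ℕ) : ℝ) = (⌈t / h⌉₊ : ℝ) - 1 := by
        push_cast [hn1]; ring
      rw [Fin.val_mk, hcast]
      rw [div_le_iff₀ hh] at h2
      linarith [h2]
  · rintro ⟨m, hm1, hm2⟩
    have hm0 : (0:ℝ) ≤ (m:ℝ)*h := by positivity
    have hmκ : (m:ℝ) + 1 ≤ (κ:ℝ) := by exact_mod_cast m.2
    constructor
    · linarith
    · nlinarith [hh.le]

def cell (κ : ℕ) (h : ℝ) (m : Fin 2 → Fin κ) : Set Vec2 :=
  Set.univ.pi fun j => Set.Ioc ((m j : ℝ)*h) ((m j : ℝ)*h + h)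

lemma Q2_eq_iUnion_cell (κ : ℕ) (hκ : 0 < κ) {h : ℝ} (hh : 0 < h)
    (hκh : (κ:ℝ) * h = 2*π) :
    Q2 = ⋃ m : Fin 2 → Fin κ, cell κ h m := by
  have h1 := Ioc_eq_iUnion κ hκ hh
  ext x
  simp only [Q2, cell, Set.mem_pi, Set.mem_univ, forall_true_left, Set.mem_iUnion]
  constructor
  · intro hx
    have hx' : ∀ j, ∃ m : Fin κ, x j ∈ Set.Ioc ((m:ℝ)*h) ((m:ℝ)*h + h) := by
      intro j
      have : x j ∈ Set.Ioc (0:ℝ) ((κ:ℝ)*h) := by rw [hκh]; exact hx j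
      rw [h1] at this
      simpa using this
    choose m hm using hx'
    exact ⟨m, hm⟩
  · rintro ⟨m, hm⟩ j
    have : x j ∈ Set.Ioc (0:ℝ) ((κ:ℝ)*h) := by
      rw [h1]; exact Set.mem_iUnion.mpr ⟨m j, hm j⟩
    rwa [hκh] at this

lemma cell_disjoint (κ : ℕ) {h : ℝ} (hh : 0 < h) :
    Pairwise (Function.onFun Disjoint (cell κ h)) := by
  intro m m' hne
  rw [Function.onFun]
  rw [Set.disjoint_left]
  intro x hx hx'
  simp only [cell, Set.mem_pi, Set.mem_univ, forall_true_left, Set.mem_Ioc] at hx hx'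
  apply hne
  funext j
  by_contra hj
  rcases Nat.lt_or_ge (m j : ℕ) (m' j : ℕ) with hlt | hge
  · have : ((m j : ℕ) : ℝ) + 1 ≤ ((m' j : ℕ) : ℝ) := by exact_mod_cast hlt
    have h1 := (hx j).2
    have h2 := (hx' j).1
    nlinarith [hh.le]
  · have hjv : (m j : ℕ) ≠ (m' j : ℕ) := fun hv => hj (Fin.val_injective hv)
    have hlt' : (m' j : ℕ) < (m j : ℕ) := by omega
    have : ((m' j : ℕ) : ℝ) + 1 ≤ ((m j : ℕ) : ℝ) := by exact_mod_cast hlt'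
    have h1 := (hx' j).2
    have h2 := (hx j).1
    nlinarith [hh.le]

lemma cell_measurable (κ : ℕ) (h : ℝ) (m : Fin 2 → Fin κ) : MeasurableSet (cell κ h m) :=
  MeasurableSet.univ_pi fun _ => measurableSet_Ioc

lemma cell_volume (κ : ℕ) {h : ℝ} (hh : 0 < h) (m : Fin 2 → Fin κ) :
    volume (cell κ h m) = ENNReal.ofReal h * ENNReal.ofReal h := by
  rw [cell, volume_pi_pi]
  simp only [Real.volume_Ioc, add_sub_cancel_left]
  rw [Fin.prod_univ_two]

lemma cell_subset (κ : ℕ) (hκ : 0 < κ) {h : ℝ} (hh : 0 < h) (hκh : (κ:ℝ) * h = 2*π)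
    (m : Fin 2 → Fin κ) : cell κ h m ⊆ Q2 := by
  rw [Q2_eq_iUnion_cell κ hκ hh hκh]
  exact Set.subset_iUnion _ m

lemma integral_Q2_sum (κ : ℕ) (hκ : 0 < κ) {h : ℝ} (hh : 0 < h) (hκh : (κ:ℝ) * h = 2*π)
    (w : Vec2 → ℝ) (hcw : Continuous w) :
    ∫ x in Q2, w x = ∑ m : Fin 2 → Fin κ, ∫ x in cell κ h m, w x := by
  rw [Q2_eq_iUnion_cell κ hκ hh hκh]
  rw [integral_iUnion (cell_measurable κ h) (cell_disjoint κ hh)]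
  · exact tsum_fintype _
  · rw [← Q2_eq_iUnion_cell κ hκ hh hκh]
    exact integrableOn_of_subset_Icc hcw Q2_subset_Icc

def wv (κ : ℕ) (h : ℝ) (m : Fin 2 → Fin κ) : Vec2 := fun j => ((m j : ℕ) : ℝ) * h

lemma add_wv (κ : ℕ) (h : ℝ) (x : Vec2) (m : Fin 2 → Fin κ) :
    x + wv κ h m = (x + (((m 0 : ℕ) : ℝ) * h) • e2 0) + (((m 1 : ℕ) : ℝ) * h) • e2 1 := by
  funext i
  fin_cases i <;> simp [wv, e2_apply]

end S13

set_option maxHeartbeats 1000000 in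
/-- `L^p` product estimate. -/
theorem statement13 :
    ∃ C : ℝ, 0 < C ∧
      ∀ κ : ℕ, 0 < κ → ∀ f g : Vec2 → ℝ,
        ContDiff ℝ (⊤ : ℕ∞) f → Per f →
        ContDiff ℝ (⊤ : ℕ∞) g →
        (∀ (x : Vec2) (j : Fin 2), g (x + (2*π/(κ:ℝ)) • e2 j) = g x) →
        Real.sqrt (∫ x in Q2, (f x * g x)^2)
          ≤ Real.sqrt (∫ x in Q2, (f x)^2)
              * Real.sqrt ((4*π^2 : ℝ)⁻¹ * ∫ x in Q2, (g x)^2)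
            + C / Real.sqrt κ
              * ((⨆ x : Vec2, |f x|) + (⨆ x : Vec2, ‖fderiv ℝ f x‖))
              * Real.sqrt (∫ x in Q2, (g x)^2) := by
  refine ⟨2, by norm_num, ?_⟩
  intro κ hκ f g hf hPerf hg hPerg
  have hπ : (0:ℝ) < π := pi_pos
  have hκR : (0:ℝ) < κ := by exact_mod_cast hκ
  set h : ℝ := 2*π/(κ:ℝ) with hdef
  have hh : 0 < h := by positivity
  have hκh : (κ:ℝ) * h = 2*π := by rw [hdef]; field_simp
  set a : ℝ := ⨆ x : Vec2, |f x| with ha_def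
  set b : ℝ := ⨆ x : Vec2, ‖fderiv ℝ f x‖ with hb_def
  have hcf : Continuous f := hf.continuous
  have hcg : Continuous g := hg.continuous
  have measQ2 : MeasurableSet Q2 := MeasurableSet.univ_pi fun _ => measurableSet_Ioc
  -- bounds on f and its derivative
  have ha : ∀ x, |f x| ≤ a :=
    fun x => S13.bdd_le_iSup hcf.abs (fun y j => by rw [hPerf y j]) x
  have ha0 : 0 ≤ a := (abs_nonneg _).trans (ha 0)
  have hdiff : Differentiable ℝ f := hf.differentiable (by simp)
  have hfderiv_per : ∀ (y : Vec2) (j : Fin 2),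
      fderiv ℝ f (y + (2*π) • e2 j) = fderiv ℝ f y := by
    intro y j
    have hcomp : HasFDerivAt (fun z => f (z + (2*π) • e2 j))
        (fderiv ℝ f (y + (2*π) • e2 j)) y := by
      have := ((hdiff (y + (2*π) • e2 j)).hasFDerivAt).comp y
        ((hasFDerivAt_id y).add_const ((2*π) • e2 j))
      rwa [ContinuousLinearMap.comp_id] at this
    have hfe : (fun z => f (z + (2*π) • e2 j)) = f := funext fun z => hPerf z j
    rw [hfe] at hcomp
    rw [hcomp.fderiv]
  have hb : ∀ x, ‖fderiv ℝ f x‖ ≤ b :=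
    fun x => S13.bdd_le_iSup ((hf.continuous_fderiv (by simp)).norm)
      (fun y j => by rw [hfderiv_per y j]) x
  have hb0 : 0 ≤ b := (norm_nonneg _).trans (hb 0)
  have hlip : ∀ u v : Vec2, |f u - f v| ≤ b * ‖u - v‖ := by
    intro u v
    have := Convex.norm_image_sub_le_of_norm_fderiv_le
      (fun y _ => hdiff y) (fun y (_ : y ∈ Set.univ) => hb y) convex_univ
      (Set.mem_univ v) (Set.mem_univ u)
    simpa [Real.norm_eq_abs] using this
  -- periodicity of g
  have hPerg2π : ∀ (x : Vec2) (j : Fin 2), g (x + (2*π) • e2 j) = g x := by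
    intro x j
    have := S13.per_nat hPerg κ x j
    rwa [hκh] at this
  have hgw : ∀ (m : Fin 2 → Fin κ) (x : Vec2), g (x + S13.wv κ h m) = g x := by
    intro m x
    rw [S13.add_wv, S13.per_nat hPerg, S13.per_nat hPerg]
  -- the integrals
  set I : ℝ := ∫ x in Q2, (f x * g x)^2 with hI_def
  set If : ℝ := ∫ x in Q2, (f x)^2 with hIf_def
  set Ig : ℝ := ∫ x in Q2, (g x)^2 with hIg_def
  have hI0 : 0 ≤ I := setIntegral_nonneg measQ2 fun x _ => sq_nonneg _
  have hIf0 : 0 ≤ If := setIntegral_nonneg measQ2 fun x _ => sq_nonneg _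
  have hIg0 : 0 ≤ Ig := setIntegral_nonneg measQ2 fun x _ => sq_nonneg _
  set M : ℝ := (4*π^2)⁻¹ * If + 2*a*b*h with hM_def
  -- step (i): each shifted integral equals I
  have hshift : ∀ m : Fin 2 → Fin κ,
      ∫ x in Q2, (f (x + S13.wv κ h m))^2 * (g x)^2 = I := by
    intro m
    have hcu : Continuous fun x => (f x * g x)^2 := (hcf.mul hcg).pow 2
    have hpu : ∀ (x : Vec2) (j : Fin 2),
        (f (x + (2*π) • e2 j) * g (x + (2*π) • e2 j))^2 = (f x * g x)^2 := by
      intro x j; rw [hPerf x j, hPerg2π x j]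
    have h1 := S13.transl_inv (u := fun x => (f x * g x)^2) hcu hpu (S13.wv κ h m)
    have h2 : (fun x => (f (x + S13.wv κ h m))^2 * (g x)^2)
        = fun x => (f (x + S13.wv κ h m) * g (x + S13.wv κ h m))^2 := by
      funext x; rw [hgw m x, mul_pow]
    rw [hI_def, ← h1]
    rw [h2]
  -- integrability of the shifted integrands
  have hint_m : ∀ m : Fin 2 → Fin κ,
      IntegrableOn (fun x => (f (x + S13.wv κ h m))^2 * (g x)^2) Q2 := by
    intro m
    have : Continuous fun x : Vec2 => (f (x + S13.wv κ h m))^2 * (g x)^2 :=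
      (((hcf.comp (continuous_id.add continuous_const)).pow 2).mul (hcg.pow 2))
    exact S13.integrableOn_of_subset_Icc this S13.Q2_subset_Icc
  have hcard : (Fintype.card (Fin 2 → Fin κ) : ℝ) = (κ:ℝ)^2 := by
    simp [Fintype.card_fun]
  -- sum identity
  have hsum_int : ∫ x in Q2, (∑ m : Fin 2 → Fin κ, (f (x + S13.wv κ h m))^2) * (g x)^2
      = (κ:ℝ)^2 * I := by
    have e1 : (fun x => (∑ m : Fin 2 → Fin κ, (f (x + S13.wv κ h m))^2) * (g x)^2)
        = fun x => ∑ m : Fin 2 → Fin κ, (f (x + S13.wv κ h m))^2 * (g x)^2 := by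
      funext x; rw [Finset.sum_mul]
    rw [e1, integral_finset_sum _ (fun m _ => hint_m m)]
    rw [Finset.sum_congr rfl (fun m _ => hshift m), Finset.sum_const, Finset.card_univ,
      nsmul_eq_mul, hcard]
  -- pointwise Riemann-sum bound
  have hpt : ∀ x : Vec2, ∑ m : Fin 2 → Fin κ, (f (x + S13.wv κ h m))^2 ≤ (κ:ℝ)^2 * M := by
    intro x
    have hcfx : Continuous fun y : Vec2 => (f (y + x))^2 :=
      (hcf.comp (continuous_id.add continuous_const)).pow 2
    have hIfx : If = ∑ m : Fin 2 → Fin κ, ∫ y in S13.cell κ h m, (f (y + x))^2 := by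
      have h1 := S13.transl_inv (u := fun z => (f z)^2) (hcf.pow 2)
        (fun y j => by show f (y + (2*π) • e2 j) ^ 2 = f y ^ 2; rw [hPerf y j]) x
      rw [hIf_def, ← h1]
      exact S13.integral_Q2_sum κ hκ hh hκh _ hcfx
    have hcell : ∀ m : Fin 2 → Fin κ,
        ((f (x + S13.wv κ h m))^2 - 2*a*b*h) * h^2 ≤ ∫ y in S13.cell κ h m, (f (y + x))^2 := by
      intro m
      have hvol : (volume (S13.cell κ h m)).toReal = h^2 := by
        rw [S13.cell_volume κ hh m, ENNReal.toReal_mul, ENNReal.toReal_ofReal hh.le]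
        ring
      have hvolne : volume (S13.cell κ h m) ≠ ⊤ := by
        rw [S13.cell_volume κ hh m]
        exact ENNReal.mul_ne_top ENNReal.ofReal_ne_top ENNReal.ofReal_ne_top
      have hlow : ∀ y ∈ S13.cell κ h m,
          (f (x + S13.wv κ h m))^2 - 2*a*b*h ≤ (f (y + x))^2 := by
        intro y hy
        simp only [S13.cell, Set.mem_pi, Set.mem_univ, forall_true_left, Set.mem_Ioc] at hy
        have hnorm : ‖(y + x) - (x + S13.wv κ h m)‖ ≤ h := by
          have heq : (y + x) - (x + S13.wv κ h m) = y - S13.wv κ h m := by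
            funext i; simp [S13.wv]; ring
          rw [heq, pi_norm_le_iff_of_nonneg hh.le]
          intro i
          rw [Real.norm_eq_abs, abs_le]
          have h1 := (hy i).1
          have h2 := (hy i).2
          constructor
          · simp only [Pi.sub_apply, S13.wv]; linarith
          · simp only [Pi.sub_apply, S13.wv]; linarith
        have h1 : |f (y + x) - f (x + S13.wv κ h m)| ≤ b * h :=
          le_trans (hlip _ _) (mul_le_mul_of_nonneg_left hnorm hb0)
        have h2 := ha (y + x)
        have h3 := ha (x + S13.wv κ h m)
        have h1' := abs_le.mp h1
        have h2' := abs_le.mp h2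
        have h3' := abs_le.mp h3
        nlinarith [h1'.1, h1'.2, h2'.1, h2'.2, h3'.1, h3'.2]
      have hintc : IntegrableOn (fun y => (f (y + x))^2) (S13.cell κ h m) :=
        S13.integrableOn_of_subset_Icc hcfx
          ((S13.cell_subset κ hκ hh hκh m).trans S13.Q2_subset_Icc)
      have := setIntegral_ge_of_const_le_real (S13.cell_measurable κ h m) hvolne hlow hintc
      rwa [measureReal_def, hvol] at this
    have hkey : (∑ m : Fin 2 → Fin κ, (f (x + S13.wv κ h m))^2 - (κ:ℝ)^2 * (2*a*b*h)) * h^2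
        ≤ If := by
      have hs := Finset.sum_le_sum (fun m (_ : m ∈ Finset.univ) => hcell m)
      rw [← hIfx] at hs
      calc (∑ m : Fin 2 → Fin κ, (f (x + S13.wv κ h m))^2 - (κ:ℝ)^2 * (2*a*b*h)) * h^2
          = ∑ m : Fin 2 → Fin κ, ((f (x + S13.wv κ h m))^2 - 2*a*b*h) * h^2 := by
            rw [← Finset.sum_mul, Finset.sum_sub_distrib, Finset.sum_const,
              Finset.card_univ, nsmul_eq_mul, hcard]
        _ ≤ If := hs
    have h4 : (κ:ℝ)^2 * h^2 = 4*π^2 := by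
      have h5 : ((κ:ℝ)*h)^2 = (2*π)^2 := by rw [hκh]
      linear_combination h5
    have hM : (κ:ℝ)^2 * M * h^2 = If + (κ:ℝ)^2 * (2*a*b*h) * h^2 := by
      have he : (4*π^2)⁻¹ * (4*π^2) = 1 := inv_mul_cancel₀ (by positivity)
      calc (κ:ℝ)^2 * M * h^2
          = (4*π^2)⁻¹ * If * ((κ:ℝ)^2 * h^2) + (κ:ℝ)^2 * (2*a*b*h) * h^2 := by
            rw [hM_def]; ring
        _ = (4*π^2)⁻¹ * If * (4*π^2) + (κ:ℝ)^2 * (2*a*b*h) * h^2 := by rw [h4]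
        _ = If * ((4*π^2)⁻¹ * (4*π^2)) + (κ:ℝ)^2 * (2*a*b*h) * h^2 := by ring
        _ = If + (κ:ℝ)^2 * (2*a*b*h) * h^2 := by rw [he, mul_one]
    have hfinal : (∑ m : Fin 2 → Fin κ, (f (x + S13.wv κ h m))^2) * h^2
        ≤ ((κ:ℝ)^2 * M) * h^2 := by
      rw [hM]
      nlinarith [hkey]
    exact le_of_mul_le_mul_right hfinal (pow_pos hh 2)
  -- monotonicity
  have hintF : IntegrableOn
      (fun x => (∑ m : Fin 2 → Fin κ, (f (x + S13.wv κ h m))^2) * (g x)^2) Q2 := by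
    have : Continuous fun x : Vec2 =>
        (∑ m : Fin 2 → Fin κ, (f (x + S13.wv κ h m))^2) * (g x)^2 := by
      apply Continuous.mul _ (hcg.pow 2)
      exact continuous_finset_sum _ fun m _ =>
        (hcf.comp (continuous_id.add continuous_const)).pow 2
    exact S13.integrableOn_of_subset_Icc this S13.Q2_subset_Icc
  have hintM : IntegrableOn (fun x : Vec2 => ((κ:ℝ)^2 * M) * (g x)^2) Q2 :=
    S13.integrableOn_of_subset_Icc (continuous_const.mul (hcg.pow 2)) S13.Q2_subset_Icc
  have hmono : (κ:ℝ)^2 * I ≤ (κ:ℝ)^2 * (M * Ig) := by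
    rw [← hsum_int]
    calc ∫ x in Q2, (∑ m : Fin 2 → Fin κ, (f (x + S13.wv κ h m))^2) * (g x)^2
        ≤ ∫ x in Q2, ((κ:ℝ)^2 * M) * (g x)^2 :=
          setIntegral_mono_on hintF hintM measQ2
            (fun x _ => mul_le_mul_of_nonneg_right (hpt x) (sq_nonneg _))
      _ = (κ:ℝ)^2 * (M * Ig) := by
          rw [MeasureTheory.integral_const_mul, hIg_def]; ring
  have hImain : I ≤ M * Ig :=
    le_of_mul_le_mul_left hmono (pow_pos hκR 2)
  -- final sqrt estimates
  have hsqκ : 0 < Real.sqrt κ := Real.sqrt_pos.mpr hκR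
  have hp1 : (0:ℝ) ≤ If * ((4*π^2)⁻¹ * Ig) := by positivity
  have hq1 : (0:ℝ) ≤ (2*a*b*h) * Ig := by positivity
  have hsplit : M * Ig = If * ((4*π^2)⁻¹ * Ig) + (2*a*b*h) * Ig := by
    rw [hM_def]; ring
  have hsqrt_add : Real.sqrt (M * Ig)
      ≤ Real.sqrt (If * ((4*π^2)⁻¹ * Ig)) + Real.sqrt ((2*a*b*h) * Ig) := by
    rw [hsplit]
    have hle : If * ((4*π^2)⁻¹ * Ig) + (2*a*b*h) * Ig
        ≤ (Real.sqrt (If * ((4*π^2)⁻¹ * Ig)) + Real.sqrt ((2*a*b*h) * Ig))^2 := by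
      rw [add_sq, Real.sq_sqrt hp1, Real.sq_sqrt hq1]
      have : 0 ≤ 2 * Real.sqrt (If * ((4*π^2)⁻¹ * Ig)) * Real.sqrt ((2*a*b*h) * Ig) := by
        positivity
      linarith
    calc Real.sqrt (If * ((4*π^2)⁻¹ * Ig) + (2*a*b*h) * Ig)
        ≤ Real.sqrt ((Real.sqrt (If * ((4*π^2)⁻¹ * Ig)) + Real.sqrt ((2*a*b*h) * Ig))^2) :=
          Real.sqrt_le_sqrt hle
      _ = _ := Real.sqrt_sq (by positivity)
  have hterm1 : Real.sqrt (If * ((4*π^2)⁻¹ * Ig))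
      = Real.sqrt If * Real.sqrt ((4*π^2)⁻¹ * Ig) := Real.sqrt_mul hIf0 _
  have hterm2 : Real.sqrt ((2*a*b*h) * Ig) ≤ 2 / Real.sqrt κ * (a + b) * Real.sqrt Ig := by
    rw [Real.sqrt_mul (by positivity)]
    have h2abh : 2*a*b*h = (4*π*a*b) / κ := by
      rw [hdef]; field_simp; ring
    have hsab : Real.sqrt (4*π*a*b) ≤ 2*(a+b) := by
      have hle : 4*π*a*b ≤ (2*(a+b))^2 := by
        nlinarith [pi_le_four, sq_nonneg (a-b), mul_nonneg ha0 hb0]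
      calc Real.sqrt (4*π*a*b) ≤ Real.sqrt ((2*(a+b))^2) := Real.sqrt_le_sqrt hle
        _ = 2*(a+b) := Real.sqrt_sq (by positivity)
    have : Real.sqrt (2*a*b*h) ≤ 2*(a+b) / Real.sqrt κ := by
      rw [h2abh, Real.sqrt_div (by positivity)]
      gcongr
    calc Real.sqrt (2*a*b*h) * Real.sqrt Ig
        ≤ (2*(a+b) / Real.sqrt κ) * Real.sqrt Ig :=
          mul_le_mul_of_nonneg_right this (Real.sqrt_nonneg _)
      _ = 2 / Real.sqrt κ * (a + b) * Real.sqrt Ig := by ring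
  calc Real.sqrt I ≤ Real.sqrt (M * Ig) := Real.sqrt_le_sqrt hImain
    _ ≤ Real.sqrt (If * ((4*π^2)⁻¹ * Ig)) + Real.sqrt ((2*a*b*h) * Ig) := hsqrt_add
    _ ≤ Real.sqrt If * Real.sqrt ((4*π^2)⁻¹ * Ig) + 2 / Real.sqrt κ * (a + b) * Real.sqrt Ig := by
        rw [hterm1]; exact add_le_add_right hterm2 _
end
end

section
/- Let k, k' ∈ Λ and let λ be a positive integer multiple of 5. Then, as an identity of smooth vector fields on 𝕋², div( b_{k,λ} ⊘ b_{k',λ} + b_{k',λ} ⊘ b_{k,λ} ) = ∇( λ² ψ_{k,λ} ψ_{k',λ} ). -/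
open MeasureTheory Real Filter Matrix
open scoped ENNReal NNReal

noncomputable section

def L0 (k : Vec2) : Vec2 →L[ℝ] ℝ := ∑ i, k i • ContinuousLinearMap.proj i

lemma L0_apply (k y : Vec2) : L0 k y = k ⬝ᵥ y := by
  simp [L0, dotProduct]

lemma L0_e2 (k : Vec2) (j : Fin 2) : L0 k (e2 j) = k j := by
  fin_cases j <;> simp [L0_apply, e2, dotProduct, Fin.sum_univ_two, Pi.single_apply]

def Efun (k : Vec2) (l : ℝ) (y : Vec2) : ℂ :=
  Complex.exp (Complex.I * ((l * (k ⬝ᵥ y) : ℝ) : ℂ))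

lemma hasFDerivAt_E (k : Vec2) (l : ℝ) (x : Vec2) :
    HasFDerivAt (Efun k l)
      (Efun k l x • ((Complex.I : ℂ) • (Complex.ofRealCLM.comp (l • L0 k)))) x := by
  have heq : (fun y : Vec2 => (k ⬝ᵥ y : ℝ)) = ⇑(L0 k) := funext fun y => (L0_apply k y).symm
  have h0 : HasFDerivAt (fun y : Vec2 => (k ⬝ᵥ y : ℝ)) (L0 k) x := by
    rw [heq]; exact (L0 k).hasFDerivAt
  have h1 := h0.const_mul l
  have h2 := (Complex.ofRealCLM.hasFDerivAt (x := l * (k ⬝ᵥ x))).comp x h1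
  have h3 := (h2.const_mul Complex.I).cexp
  exact h3

lemma hasFDerivAt_EE (k k' : Vec2) (l : ℝ) (x : Vec2) :
    HasFDerivAt (fun y => Efun k l y * Efun k' l y)
      (Efun k l x • (Efun k' l x • ((Complex.I : ℂ) • (Complex.ofRealCLM.comp (l • L0 k'))))
        + Efun k' l x • (Efun k l x • ((Complex.I : ℂ) • (Complex.ofRealCLM.comp (l • L0 k))))) x :=
  (hasFDerivAt_E k l x).mul (hasFDerivAt_E k' l x)

lemma fderiv_EE_apply (k k' : Vec2) (l : ℝ) (x : Vec2) (j : Fin 2) :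
    fderiv ℝ (fun y => Efun k l y * Efun k' l y) x (e2 j)
      = Complex.I * l * (k j + k' j) * (Efun k l x * Efun k' l x) := by
  rw [(hasFDerivAt_EE k k' l x).fderiv]
  simp [L0_e2, smul_eq_mul]
  ring

lemma norm_one {k : Vec2} (hk : k ∈ Λdir) : k 0 ^ 2 + k 1 ^ 2 = 1 := by
  simp only [Λdir, Λp, Λm, Finset.mem_union, Finset.mem_image, Finset.mem_insert,
    Finset.mem_singleton] at hk
  rcases hk with (rfl|rfl|rfl|rfl) | ⟨a, (rfl|rfl|rfl|rfl), rfl⟩ <;>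
    norm_num [Matrix.cons_val_zero, Matrix.cons_val_one, Matrix.head_cons, Pi.neg_apply]

/-- For `k, k' ∈ Λ` and `λ ∈ 5ℤ⁺`,
`div(b_{k,λ} ⊘ b_{k',λ} + b_{k',λ} ⊘ b_{k,λ}) = ∇(λ² ψ_{k,λ} ψ_{k',λ})`. -/
theorem statement18 (k : Vec2) (hk : k ∈ Λdir) (k' : Vec2) (hk' : k' ∈ Λdir)
    (l : ℝ) (hl : ∃ n : ℕ, 0 < n ∧ l = 5 * n) :
    ∀ (x : Vec2) (i : Fin 2),
      (∑ j, fderiv ℝ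
          (fun y => otC (bflow k l y) (bflow k' l y) i j
            + otC (bflow k' l y) (bflow k l y) i j) x (e2 j))
        = fderiv ℝ (fun y => ((l : ℂ))^2 * ψflow k l y * ψflow k' l y) x (e2 i) := by
  obtain ⟨n, hn, rfl⟩ := hl
  have hl0 : (5 * (n:ℝ)) ≠ 0 := by positivity
  have hl0C : ((5 * (n:ℝ) : ℝ) : ℂ) ≠ 0 := by exact_mod_cast hl0
  set l : ℝ := 5 * (n:ℝ) with hldef
  intro x i
  set A : Fin 2 → Fin 2 → ℝ := fun i j =>
    -(perp k i * perp k' j + perp k' i * perp k j)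
      + (if i = j then (perp k ⬝ᵥ perp k') else 0) with hA
  have hR : (fun y => ((l:ℂ))^2 * ψflow k l y * ψflow k' l y)
      = fun y => Efun k l y * Efun k' l y := by
    funext y
    simp only [ψflow, Efun]
    field_simp
  have hL : ∀ j, (fun y => otC (bflow k l y) (bflow k' l y) i j
        + otC (bflow k' l y) (bflow k l y) i j)
      = fun y => ((A i j : ℝ) : ℂ) * (Efun k l y * Efun k' l y) := by
    intro j
    funext y
    simp only [otC, bflow, hA, dotProduct, Fin.sum_univ_two, Efun]
    by_cases hij : i = j <;> simp [hij] <;> push_cast <;> ring_nf <;>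
      simp [Complex.I_sq] <;> ring_nf
  have hstep : ∀ j, fderiv ℝ
      (fun y => otC (bflow k l y) (bflow k' l y) i j
        + otC (bflow k' l y) (bflow k l y) i j) x (e2 j)
      = ((A i j : ℝ) : ℂ) * (Complex.I * l * (k j + k' j) * (Efun k l x * Efun k' l x)) := by
    intro j
    rw [hL j, fderiv_const_mul (hasFDerivAt_EE k k' l x).differentiableAt]
    simp only [ContinuousLinearMap.smul_apply, smul_eq_mul, fderiv_EE_apply]
  rw [hR, Finset.sum_congr rfl (fun j _ => hstep j), fderiv_EE_apply]
  have h1 : ((k 0 : ℝ) : ℂ) ^ 2 + ((k 1 : ℝ) : ℂ) ^ 2 = 1 := by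
    exact_mod_cast congrArg (Complex.ofReal) (norm_one hk)
  have h2 : ((k' 0 : ℝ) : ℂ) ^ 2 + ((k' 1 : ℝ) : ℂ) ^ 2 = 1 := by
    exact_mod_cast congrArg (Complex.ofReal) (norm_one hk')
  simp only [Fin.sum_univ_two, hA, dotProduct, perp, Matrix.cons_val_zero,
    Matrix.cons_val_one, Matrix.head_cons]
  fin_cases i
  · norm_num
    linear_combination (Complex.I * (l:ℂ) * (Efun k l x * Efun k' l x)) *
      (((k' 0 : ℝ) : ℂ) * h1 + ((k 0 : ℝ) : ℂ) * h2)
  · norm_num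
    linear_combination (Complex.I * (l:ℂ) * (Efun k l x * Efun k' l x)) *
      (((k' 1 : ℝ) : ℂ) * h1 + ((k 1 : ℝ) : ℂ) * h2)
end
end

section
/- Let r, μ ∈ ℤ⁺ and λ, σ be such that σ^{−1} ∈ ℤ⁺, λ is a positive integer multiple of 5, and λσ is a positive integer multiple of 5. Write w_k = w_{k,λ,σ,r,μ} and η_k = η_{k,λ,σ,r,μ}. Then for every k ∈ Λ: w_k ⊘ w_{−k} + w_{−k} ⊘ w_k = η_k² (I₂ − 2 k ⊗ k), and div( w_k ⊘ w_{−k} + w_{−k} ⊘ w_k ) = ∇(η_k²) − 2μ^{−1} k ∂_t(η_k²) if k ∈ Λ⁺, while div( w_k ⊘ w_{−k} + w_{−k} ⊘ w_k ) = ∇(η_k²) + 2μ^{−1} k ∂_t(η_k²) if k ∈ Λ⁻. -/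
open MeasureTheory Real Filter Matrix
open scoped ENNReal NNReal

noncomputable section

section Aux

lemma dich (k : Vec2) (hk : k ∈ Λdir) :
    (k 0^2 + k 1^2 = 1) ∧ ((k ∈ Λp ∧ -k ∉ Λp) ∨ (k ∉ Λp ∧ -k ∈ Λp)) := by
  have hk' : k ∈ Λp ∨ ∃ a ∈ Λp, -a = k := by
    simpa only [Λdir, Λm, Finset.mem_union, Finset.mem_image] using hk
  simp only [Λp, Finset.mem_insert, Finset.mem_singleton] at hk'
  rcases hk' with (h|h|h|h) | ⟨a, (h|h|h|h), ha⟩ <;>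
    [subst h; subst h; subst h; subst h; (subst h; subst ha); (subst h; subst ha);
     (subst h; subst ha); (subst h; subst ha)] <;>
  constructor <;>
  norm_num [Λp, funext_iff, Fin.forall_fin_two, Finset.mem_insert, Finset.mem_singleton]

lemma eta_neg (k : Vec2) (l σ : ℝ) (r : ℕ) (μ t : ℝ) (x : Vec2)
    (h : (k ∈ Λp ∧ -k ∉ Λp) ∨ (k ∉ Λp ∧ -k ∈ Λp)) :
    ηfun (-k) l σ r μ t x = ηfun k l σ r μ t x := by
  have hnn : -(-k) = k := neg_neg k
  rcases h with ⟨h1, h2⟩ | ⟨h1, h2⟩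
  · simp [ηfun, h1, h2, hnn]
  · simp [ηfun, h1, h2, hnn]

lemma perp_neg_apply (k : Vec2) (j : Fin 2) : perp (-k) j = - perp k j := by
  fin_cases j <;> simp [perp]

lemma part1 (k : Vec2) (l σ : ℝ) (r : ℕ) (μ t : ℝ) (x : Vec2)
    (hn : k 0^2 + k 1^2 = 1)
    (hη : ηfun (-k) l σ r μ t x = ηfun k l σ r μ t x) (i j : Fin 2) :
    otC (wflow k l σ r μ t x) (wflow (-k) l σ r μ t x) i j
      + otC (wflow (-k) l σ r μ t x) (wflow k l σ r μ t x) i j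
    = (((ηfun k l σ r μ t x)^2 * ((if i = j then 1 else 0) - 2 * k i * k j) : ℝ) : ℂ) := by
  set η : ℝ := ηfun k l σ r μ t x with hηdef
  set E : ℂ := Complex.exp (Complex.I * ((l * (k ⬝ᵥ x) : ℝ) : ℂ)) with hEdef
  have hE : E ≠ 0 := Complex.exp_ne_zero _
  have hE1 : E * E⁻¹ = 1 := mul_inv_cancel₀ hE
  have hexp : Complex.exp (Complex.I * ((l * ((-k) ⬝ᵥ x) : ℝ) : ℂ)) = E⁻¹ := by
    rw [hEdef, ← Complex.exp_neg]
    congr 1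
    push_cast [neg_dotProduct]
    ring
  have hw : ∀ i' j' : Fin 2, wflow k l σ r μ t x i' * wflow (-k) l σ r μ t x j'
      = ((η^2 * (perp k i' * perp k j') : ℝ) : ℂ) := by
    intro i' j'
    simp only [wflow, bflow, hη, ← hηdef, hexp, perp_neg_apply, ← hEdef]
    push_cast
    linear_combination (-(η:ℂ)^2 * (perp k i') * (perp k j') * E * E⁻¹) * Complex.I_mul_I
      + ((η:ℂ)^2 * (perp k i') * (perp k j')) * hE1
  have hnC : (k 0 : ℂ)^2 + (k 1 : ℂ)^2 = 1 := by exact_mod_cast hn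
  have hw' : ∀ i' j' : Fin 2, wflow (-k) l σ r μ t x i' * wflow k l σ r μ t x j'
      = ((η^2 * (perp k j' * perp k i') : ℝ) : ℂ) := by
    intro i' j'; rw [mul_comm]; exact hw j' i'
  simp only [otC, dotProduct, Fin.sum_univ_two, hw, hw']
  fin_cases i <;> fin_cases j <;>
    simp [perp] <;> push_cast <;>
    first
      | linear_combination ((η:ℂ)^2) * hnC
      | linear_combination (-(η:ℂ)^2) * hnC
      | linear_combination (2*(η:ℂ)^2) * hnC
      | linear_combination (-2*(η:ℂ)^2) * hnC
      | ring

lemma hF_diff (r : ℕ) : Differentiable ℝ (fun p : ℝ × ℝ => (DkerR r p.1 p.2)^2) := by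
  have h1 : Differentiable ℝ (fun p : ℝ × ℝ => ((((2*(r:ℝ)+1) : ℝ) : ℂ)⁻¹ *
      ∑ k ∈ Ωr r, Complex.exp (Complex.I * (((k.1 : ℝ) * p.1 + (k.2 : ℝ) * p.2 : ℝ) : ℂ)))) := by
    apply Differentiable.const_mul
    apply Differentiable.fun_sum
    intro k _
    apply Complex.differentiable_exp.comp
    apply Differentiable.const_mul
    apply Complex.ofRealCLM.differentiable.comp
    exact (differentiable_fst.const_mul _).add (differentiable_snd.const_mul _)
  exact (Complex.reCLM.differentiable.comp h1).pow 2

set_option maxHeartbeats 2000000 in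
lemma keyAB (r : ℕ) (l σ μ t : ℝ) (m x : Vec2) : ∃ (A B : ℝ) (L : Vec2 →L[ℝ] ℝ),
    HasFDerivAt (fun y : Vec2 =>
        (DkerR r (l*σ*(m ⬝ᵥ y + μ*t)) (l*σ*(perp m ⬝ᵥ y)))^2) L x ∧
    (∀ j : Fin 2, L (e2 j) = l*σ*(m j)*A + l*σ*(perp m j)*B) ∧
    HasDerivAt (fun s : ℝ =>
        (DkerR r (l*σ*(m ⬝ᵥ x + μ*s)) (l*σ*(perp m ⬝ᵥ x)))^2) (l*σ*μ*A) t := by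
  classical
  set F : ℝ × ℝ → ℝ := fun p => (DkerR r p.1 p.2)^2 with hFdef
  have hF : Differentiable ℝ F := hF_diff r
  set p0 : ℝ × ℝ := (l*σ*(m ⬝ᵥ x + μ*t), l*σ*(perp m ⬝ᵥ x)) with hp0
  set DF : (ℝ × ℝ) →L[ℝ] ℝ := fderiv ℝ F p0 with hDF
  have hDFat : HasFDerivAt F DF p0 := (hF p0).hasFDerivAt
  have h0 : HasFDerivAt (fun y : Vec2 => y 0)
      (ContinuousLinearMap.proj (R := ℝ) (φ := fun _ : Fin 2 => ℝ) 0) x := by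
    exact (ContinuousLinearMap.proj (R := ℝ) (φ := fun _ : Fin 2 => ℝ) 0).hasFDerivAt
  have h1 : HasFDerivAt (fun y : Vec2 => y 1)
      (ContinuousLinearMap.proj (R := ℝ) (φ := fun _ : Fin 2 => ℝ) 1) x := by
    exact (ContinuousLinearMap.proj (R := ℝ) (φ := fun _ : Fin 2 => ℝ) 1).hasFDerivAt
  have hc1 : HasFDerivAt (fun y : Vec2 => l*σ*(m ⬝ᵥ y + μ*t))
      ((l*σ) • ((m 0 • ContinuousLinearMap.proj 0 + m 1 • ContinuousLinearMap.proj 1 :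
        Vec2 →L[ℝ] ℝ))) x := by
    have heq : (fun y : Vec2 => l*σ*(m ⬝ᵥ y + μ*t))
        = fun y : Vec2 => l*σ*((m 0 * y 0 + m 1 * y 1) + μ*t) := by
      funext y; simp [dotProduct, Fin.sum_univ_two]
    rw [heq]
    exact (((h0.const_mul (m 0)).add (h1.const_mul (m 1))).add_const (μ*t)).const_mul (l*σ)
  have hc2 : HasFDerivAt (fun y : Vec2 => l*σ*(perp m ⬝ᵥ y))
      ((l*σ) • ((perp m 0 • ContinuousLinearMap.proj 0 + perp m 1 • ContinuousLinearMap.proj 1 :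
        Vec2 →L[ℝ] ℝ))) x := by
    have heq : (fun y : Vec2 => l*σ*(perp m ⬝ᵥ y))
        = fun y : Vec2 => l*σ*(perp m 0 * y 0 + perp m 1 * y 1) := by
      funext y; simp [dotProduct, Fin.sum_univ_two]
    rw [heq]
    exact ((h0.const_mul (perp m 0)).add (h1.const_mul (perp m 1))).const_mul (l*σ)
  have hu := hc1.prodMk hc2
  have hcomp0 : HasFDerivAt (F ∘ (fun y : Vec2 =>
      ((l*σ*(m ⬝ᵥ y + μ*t), l*σ*(perp m ⬝ᵥ y)) : ℝ × ℝ)))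
      (DF.comp _) x := hDFat.comp x hu
  have hfun0 : (F ∘ (fun y : Vec2 => ((l*σ*(m ⬝ᵥ y + μ*t), l*σ*(perp m ⬝ᵥ y)) : ℝ × ℝ)))
      = fun y : Vec2 => (DkerR r (l*σ*(m ⬝ᵥ y + μ*t)) (l*σ*(perp m ⬝ᵥ y)))^2 := by
    funext y
    simp only [Function.comp_apply, hFdef]
  rw [hfun0] at hcomp0
  have hcomp := hcomp0
  have hprodAB : ∀ a b : ℝ, DF (a, b) = a * DF (1, 0) + b * DF (0, 1) := by
    intro a b
    have hab : ((a, b) : ℝ × ℝ) = a • ((1:ℝ), (0:ℝ)) + b • ((0:ℝ), (1:ℝ)) := by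
      simp [Prod.ext_iff]
    rw [hab, map_add, _root_.map_smul, _root_.map_smul, smul_eq_mul, smul_eq_mul]
  refine ⟨DF (1, 0), DF (0, 1), _, hcomp, ?_, ?_⟩
  · intro j
    rw [ContinuousLinearMap.comp_apply]
    simp only [ContinuousLinearMap.prod_apply, ContinuousLinearMap.smul_apply,
      ContinuousLinearMap.add_apply, ContinuousLinearMap.proj_apply, smul_eq_mul]
    rw [hprodAB]
    fin_cases j <;> simp [e2, Pi.single_apply] <;> ring
  · have hs : HasDerivAt (fun s : ℝ => l*σ*(m ⬝ᵥ x + μ*s)) (l*σ*μ) t := by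
      simpa using (((hasDerivAt_id t).const_mul μ).const_add (m ⬝ᵥ x)).const_mul (l*σ)
    have hv : HasDerivAt (fun s : ℝ => ((l*σ*(m ⬝ᵥ x + μ*s), l*σ*(perp m ⬝ᵥ x)) : ℝ × ℝ))
        ((l*σ*μ, 0)) t := hs.prodMk (hasDerivAt_const t _)
    have hd := hDFat.comp_hasDerivAt t hv
    have hval : DF (l*σ*μ, 0) = l*σ*μ*(DF (1,0)) := by
      rw [hprodAB]; ring
    rw [hval] at hd
    exact hd

end Aux


lemma divPart (r : ℕ) (l σ μ t : ℝ) (hμ : μ ≠ 0) (k m : Vec2) (x : Vec2)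
    (ε : ℝ) (hkm : ∀ j, k j = ε * m j)
    (hn : m 0^2 + m 1^2 = 1)
    (hc : (k ∈ Λp ∧ -k ∉ Λp) ∨ (k ∉ Λp ∧ -k ∈ Λp))
    (hkn : k 0^2 + k 1^2 = 1)
    (hηeq : ∀ (s : ℝ) (y : Vec2), ηfun k l σ r μ s y
      = DkerR r (l*σ*(m ⬝ᵥ y + μ*s)) (l*σ*(perp m ⬝ᵥ y))) (i : Fin 2) :
    (∑ j, fderiv ℝ (fun y => otC (wflow k l σ r μ t y) (wflow (-k) l σ r μ t y) i j
        + otC (wflow (-k) l σ r μ t y) (wflow k l σ r μ t y) i j) x (e2 j))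
    = ((fderiv ℝ (fun y => (ηfun k l σ r μ t y)^2) x (e2 i)
        - ε * (2 * μ⁻¹ * k i * deriv (fun s => (ηfun k l σ r μ s x)^2) t) : ℝ) : ℂ) := by
  obtain ⟨A, B, L, hL, hLe, hT⟩ := keyAB r l σ μ t m x
  have hηfun2x : (fun y : Vec2 => (ηfun k l σ r μ t y)^2)
      = fun y => (DkerR r (l*σ*(m ⬝ᵥ y + μ*t)) (l*σ*(perp m ⬝ᵥ y)))^2 := by
    funext y; rw [hηeq]
  have hηfun2t : (fun s : ℝ => (ηfun k l σ r μ s x)^2)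
      = fun s => (DkerR r (l*σ*(m ⬝ᵥ x + μ*s)) (l*σ*(perp m ⬝ᵥ x)))^2 := by
    funext s; rw [hηeq]
  have hL2 : HasFDerivAt (fun y : Vec2 => (ηfun k l σ r μ t y)^2) L x := by
    rw [hηfun2x]; exact hL
  have hT2 : HasDerivAt (fun s : ℝ => (ηfun k l σ r μ s x)^2) (l*σ*μ*A) t := by
    rw [hηfun2t]; exact hT
  have hηn : ∀ y, ηfun (-k) l σ r μ t y = ηfun k l σ r μ t y :=
    fun y => eta_neg k l σ r μ t y hc
  have hder : ∀ j : Fin 2,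
      fderiv ℝ (fun y => otC (wflow k l σ r μ t y) (wflow (-k) l σ r μ t y) i j
        + otC (wflow (-k) l σ r μ t y) (wflow k l σ r μ t y) i j) x (e2 j)
      = (((((if i = j then (1:ℝ) else 0) - 2*k i*k j) * L (e2 j)) : ℝ) : ℂ) := by
    intro j
    have hent : (fun y => otC (wflow k l σ r μ t y) (wflow (-k) l σ r μ t y) i j
        + otC (wflow (-k) l σ r μ t y) (wflow k l σ r μ t y) i j)
        = fun y => (((ηfun k l σ r μ t y)^2
            * ((if i = j then (1:ℝ) else 0) - 2*k i*k j) : ℝ) : ℂ) := by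
      funext y; exact part1 k l σ r μ t y hkn (hηn y) i j
    rw [hent]
    have hg : HasFDerivAt (fun y : Vec2 =>
        (ηfun k l σ r μ t y)^2 * ((if i = j then (1:ℝ) else 0) - 2*k i*k j))
        ((((if i = j then (1:ℝ) else 0) - 2*k i*k j)) • L) x := hL2.mul_const _
    have hgc : HasFDerivAt (fun y : Vec2 => (((ηfun k l σ r μ t y)^2
          * ((if i = j then (1:ℝ) else 0) - 2*k i*k j) : ℝ) : ℂ))
        (Complex.ofRealCLM.comp ((((if i = j then (1:ℝ) else 0) - 2*k i*k j)) • L)) x :=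
      Complex.ofRealCLM.hasFDerivAt.comp x hg
    rw [hgc.fderiv]
    simp [smul_eq_mul]
  simp only [hder]
  rw [hL2.fderiv, hT2.deriv]
  rw [Fin.sum_univ_two, ← Complex.ofReal_add, Complex.ofReal_inj]
  have hμμ : μ⁻¹ * μ = 1 := inv_mul_cancel₀ hμ
  simp only [hLe, hkm]
  fin_cases i <;> simp [perp] <;>
    first
      | linear_combination (-2*ε^2*(m 0)*l*σ*A) * hn + (2*ε^2*(m 0)*l*σ*A) * hμμ
      | linear_combination (-2*ε^2*(m 1)*l*σ*A) * hn + (2*ε^2*(m 1)*l*σ*A) * hμμ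
      | ring

/-- The antipodal interaction:
`w_k ⊘ w_{−k} + w_{−k} ⊘ w_k = η_k² (I₂ − 2 k ⊗ k)`, and
`div(w_k ⊘ w_{−k} + w_{−k} ⊘ w_k) = ∇(η_k²) ∓ 2μ⁻¹ k ∂ₜ(η_k²)` for `k ∈ Λ^±`. -/
theorem statement19 (r μ : ℕ) (hr : 0 < r) (hμ : 0 < μ) (l σ : ℝ)
    (hσ : ∃ n : ℕ, 0 < n ∧ σ⁻¹ = (n : ℝ))
    (hl : ∃ n : ℕ, 0 < n ∧ l = 5 * n)
    (hlσ : ∃ n : ℕ, 0 < n ∧ l * σ = 5 * n) :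
    (∀ k ∈ Λdir, ∀ (t : ℝ) (x : Vec2) (i j : Fin 2),
      otC (wflow k l σ r (μ:ℝ) t x) (wflow (-k) l σ r (μ:ℝ) t x) i j
        + otC (wflow (-k) l σ r (μ:ℝ) t x) (wflow k l σ r (μ:ℝ) t x) i j
      = (((ηfun k l σ r (μ:ℝ) t x)^2
          * ((if i = j then 1 else 0) - 2 * k i * k j) : ℝ) : ℂ)) ∧
    (∀ k ∈ Λp, ∀ (t : ℝ) (x : Vec2) (i : Fin 2),
      (∑ j, fderiv ℝ
          (fun y => otC (wflow k l σ r (μ:ℝ) t y) (wflow (-k) l σ r (μ:ℝ) t y) i j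
            + otC (wflow (-k) l σ r (μ:ℝ) t y) (wflow k l σ r (μ:ℝ) t y) i j) x (e2 j))
        = ((fderiv ℝ (fun y => (ηfun k l σ r (μ:ℝ) t y)^2) x (e2 i)
            - 2 * ((μ:ℝ))⁻¹ * k i * deriv (fun s => (ηfun k l σ r (μ:ℝ) s x)^2) t
            : ℝ) : ℂ)) ∧
    (∀ k ∈ Λm, ∀ (t : ℝ) (x : Vec2) (i : Fin 2),
      (∑ j, fderiv ℝ
          (fun y => otC (wflow k l σ r (μ:ℝ) t y) (wflow (-k) l σ r (μ:ℝ) t y) i j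
            + otC (wflow (-k) l σ r (μ:ℝ) t y) (wflow k l σ r (μ:ℝ) t y) i j) x (e2 j))
        = ((fderiv ℝ (fun y => (ηfun k l σ r (μ:ℝ) t y)^2) x (e2 i)
            + 2 * ((μ:ℝ))⁻¹ * k i * deriv (fun s => (ηfun k l σ r (μ:ℝ) s x)^2) t
            : ℝ) : ℂ)) := by
  have hμR : ((μ:ℝ)) ≠ 0 := Nat.cast_ne_zero.mpr hμ.ne'
  refine ⟨?_, ?_, ?_⟩
  · intro k hk t x i j
    obtain ⟨hn, hc⟩ := dich k hk
    exact part1 k l σ r (μ:ℝ) t x hn (eta_neg k l σ r (μ:ℝ) t x hc) i j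
  · intro k hk t x i
    have hkd : k ∈ Λdir := Finset.mem_union_left _ hk
    obtain ⟨hn, hc⟩ := dich k hkd
    have hηeq : ∀ (s : ℝ) (y : Vec2), ηfun k l σ r (μ:ℝ) s y
        = DkerR r (l*σ*(k ⬝ᵥ y + (μ:ℝ)*s)) (l*σ*(perp k ⬝ᵥ y)) := by
      intro s y; simp only [ηfun, if_pos hk]
    have h := divPart r l σ (μ:ℝ) t hμR k k x 1 (fun j => (one_mul _).symm) hn hc hn hηeq i
    rw [h]
    norm_num
  · intro k hk t x i
    have hkd : k ∈ Λdir := Finset.mem_union_right _ hk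
    obtain ⟨hn, hc⟩ := dich k hkd
    obtain ⟨a, hap, hak⟩ := Finset.mem_image.mp hk
    have hmkp : -k ∈ Λp := by rw [← hak, neg_neg]; exact hap
    have hknotp : k ∉ Λp := by
      rcases hc with h | h
      · exact absurd hmkp h.2
      · exact h.1
    have hηeq : ∀ (s : ℝ) (y : Vec2), ηfun k l σ r (μ:ℝ) s y
        = DkerR r (l*σ*((-k) ⬝ᵥ y + (μ:ℝ)*s)) (l*σ*(perp (-k) ⬝ᵥ y)) := by
      intro s y; simp only [ηfun, if_neg hknotp]
    have hnm : (-k) 0^2 + (-k) 1^2 = 1 := by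
      simp only [Pi.neg_apply]; linear_combination hn
    have hkm : ∀ j, k j = (-1 : ℝ) * ((-k) j) := by intro j; simp
    have h := divPart r l σ (μ:ℝ) t hμR k (-k) x (-1) hkm hnm hc hn hηeq i
    rw [h]
    norm_num
end
end
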